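/- arXiv:2005.05881 — 11 statements merged into one kernel-verified Lean document; each statement's English description precedes it below -/
import Mathlib

section
/- Let ℓ be an odd prime and γ ∈ GL₂(𝔽_ℓ). Then γ has an eigenvalue in 𝔽_ℓ if and only if γ² has an eigenvalue in 𝔽_ℓ and γ² is not a scalar matrix a·I with a a non-square in 𝔽_ℓ^×. -/
open Polynomial

theorem stmt_2 (ℓ : ℕ) [Fact (Nat.Prime ℓ)] (hodd : Odd ℓ)
    (γ : GL (Fin 2) (ZMod ℓ)) :
    (∃ a : ZMod ℓ, (Matrix.charpoly ((γ : Matrix (Fin 2) (Fin 2) (ZMod ℓ)))).IsRoot a) ↔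
      ((∃ a : ZMod ℓ,
          (Matrix.charpoly (((γ ^ 2 : GL (Fin 2) (ZMod ℓ)) :
            Matrix (Fin 2) (Fin 2) (ZMod ℓ)))).IsRoot a) ∧
        ¬ ∃ a : ZMod ℓ, a ≠ 0 ∧ ¬ IsSquare a ∧
          ((γ ^ 2 : GL (Fin 2) (ZMod ℓ)) : Matrix (Fin 2) (Fin 2) (ZMod ℓ)) = a • 1) := by
  set M : Matrix (Fin 2) (Fin 2) (ZMod ℓ) := (γ : Matrix (Fin 2) (Fin 2) (ZMod ℓ)) with hM
  have hcoe : ((γ ^ 2 : GL (Fin 2) (ZMod ℓ)) : Matrix (Fin 2) (Fin 2) (ZMod ℓ)) = M ^ 2 := by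
    rw [hM]; exact Units.val_pow_eq_pow_val γ 2
  set t : ZMod ℓ := M.trace with ht
  set d : ZMod ℓ := M.det with hdet
  have hd : d ≠ 0 := by
    have : IsUnit M.det := (Matrix.isUnit_iff_isUnit_det M).mp γ.isUnit
    exact this.ne_zero
  have hcp : ∀ N : Matrix (Fin 2) (Fin 2) (ZMod ℓ),
      N.charpoly = X ^ 2 - C N.trace * X + C N.det := by
    intro N
    rw [Matrix.charpoly, Matrix.det_fin_two]
    simp only [Matrix.charmatrix_apply_eq, Matrix.charmatrix_apply_ne _ _ _ (by decide : (0 : Fin 2) ≠ 1),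
      Matrix.charmatrix_apply_ne _ _ _ (by decide : (1 : Fin 2) ≠ 0),
      Matrix.trace_fin_two, Matrix.det_fin_two, map_add, map_mul, map_sub]
    ring
  have hroot : ∀ (N : Matrix (Fin 2) (Fin 2) (ZMod ℓ)) (x : ZMod ℓ),
      N.charpoly.IsRoot x ↔ x ^ 2 - N.trace * x + N.det = 0 := by
    intro N x
    rw [hcp]
    simp [Polynomial.IsRoot]
  have hCH : M ^ 2 = t • M - d • 1 := by
    have h := Matrix.aeval_self_charpoly M
    rw [hcp] at h
    simp only [map_add, map_sub, map_mul, Polynomial.aeval_X, Polynomial.aeval_C, map_pow,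
      Algebra.algebraMap_eq_smul_one, smul_mul_assoc, one_mul] at h
    rw [← ht, ← hdet] at h
    rw [← sub_eq_zero]
    rw [show M ^ 2 - (t • M - d • 1) = M ^ 2 - t • M + d • 1 by abel]
    exact h
  have htr2 : (M ^ 2).trace = t * t - d * 2 := by
    rw [hCH]
    simp [Matrix.trace_smul, Matrix.trace_one, smul_eq_mul, mul_comm]
    exact Or.inl ht.symm
  have hdet2 : (M ^ 2).det = d ^ 2 := by rw [Matrix.det_pow, hdet]
  constructor
  · rintro ⟨a, ha⟩
    rw [hroot] at ha
    refine ⟨⟨a ^ 2, ?_⟩, ?_⟩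
    · rw [hcoe, hroot, htr2, hdet2]
      linear_combination (a ^ 2 + t * a + d) * ha
    · rintro ⟨b, hb0, hbns, hbeq⟩
      rw [hcoe] at hbeq
      apply hbns
      have h1 : t * t - d * 2 = 2 * b := by
        rw [← htr2, hbeq]; simp [Matrix.trace_smul, Matrix.trace_one]; ring
      have h2 : d ^ 2 = b ^ 2 := by
        rw [← hdet2, hbeq]
        simp [Matrix.det_smul, Matrix.det_one]
      refine ⟨a, ?_⟩
      have hsq : (a * a - b) ^ 2 = 0 := by
        linear_combination (a ^ 2 + t * a + d) * ha + a ^ 2 * h1 - h2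
      have h0 := pow_eq_zero_iff (n := 2) (by norm_num) |>.mp hsq
      exact (sub_eq_zero.mp h0).symm
  · rintro ⟨⟨a, ha⟩, hns⟩
    rw [hcoe, hroot, htr2, hdet2] at ha
    by_cases htz : t = 0
    · have hM2 : M ^ 2 = (-d) • 1 := by
        rw [hCH, htz]; simp
      push_neg at hns
      have hsq : IsSquare (-d) := by
        by_contra hc
        exact hns (-d) (by simpa using hd) hc (by rw [hcoe, hM2])
      obtain ⟨r, hr⟩ := hsq
      refine ⟨r, ?_⟩
      rw [hroot]
      linear_combination -hr - r * htz
    · refine ⟨(a + d) / t, ?_⟩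
      rw [hroot]
      have key : (a + d) ^ 2 = t ^ 2 * a := by linear_combination ha
      field_simp
      linear_combination key
end

section
/- Let ℓ be an odd prime. The proportion of matrices in SL₂(𝔽_ℓ) having an eigenvalue in 𝔽_ℓ equals (ℓ+3)/(2(ℓ+1)). -/
open Finset Polynomial

section Aux

variable {ℓ : ℕ} [Fact (Nat.Prime ℓ)]

private lemma SL2aux_two_ne_negTwo (hodd : Odd ℓ) : (2 : ZMod ℓ) ≠ -2 := by
  intro h
  have h4 : ((4 : ℕ) : ZMod ℓ) = 0 := by push_cast; linear_combination h
  rw [ZMod.natCast_eq_zero_iff] at h4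
  have hp : Nat.Prime ℓ := Fact.out
  have h2 : ℓ ∣ 2 := hp.dvd_of_dvd_pow (n := 2) (by norm_num at h4 ⊢; exact h4)
  have : ℓ = 2 := (Nat.prime_dvd_prime_iff_eq hp Nat.prime_two).mp h2
  rw [this] at hodd
  simp [Nat.odd_iff] at hodd

private lemma SL2aux_pair_count (e : ZMod ℓ) :
    (Finset.univ.filter (fun p : ZMod ℓ × ZMod ℓ => p.1 * p.2 = e)).card
      = if e = 0 then 2 * ℓ - 1 else ℓ - 1 := by
  have hcard : Fintype.card (ZMod ℓ) = ℓ := ZMod.card ℓ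
  split_ifs with he
  · subst he
    have : (Finset.univ.filter (fun p : ZMod ℓ × ZMod ℓ => p.1 * p.2 = 0))
        = (({0} : Finset (ZMod ℓ)) ×ˢ univ) ∪ (univ ×ˢ ({0} : Finset (ZMod ℓ))) := by
      ext p
      simp only [Finset.mem_filter, Finset.mem_univ, true_and, Finset.mem_union,
        Finset.mem_product, Finset.mem_singleton, and_true, true_and]
      exact mul_eq_zero
    rw [this, Finset.card_union]
    have h1 : (({0} : Finset (ZMod ℓ)) ×ˢ univ) ∩ (univ ×ˢ ({0} : Finset (ZMod ℓ)))
        = {((0 : ZMod ℓ), (0 : ZMod ℓ))} := by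
      ext p
      simp only [Finset.mem_inter, Finset.mem_product, Finset.mem_singleton, Finset.mem_univ,
        and_true, true_and, Prod.ext_iff]
    rw [h1]
    simp only [Finset.card_product, Finset.card_singleton, Finset.card_univ, hcard, one_mul,
      mul_one]
    omega
  · rw [Finset.card_bij' (fun p _ => p.1) (fun b _ => (b, b⁻¹ * e)) ?_ ?_ ?_ ?_
      (t := Finset.univ.erase 0)]
    · rw [Finset.card_erase_of_mem (Finset.mem_univ _), Finset.card_univ, hcard]
    · rintro ⟨b, c⟩ hp
      simp only [Finset.mem_filter] at hp
      simp only [Finset.mem_erase, Finset.mem_univ, and_true]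
      rintro rfl
      simp only [zero_mul] at hp
      exact he hp.2.symm
    · intro b hb
      simp only [Finset.mem_erase] at hb
      simp only [Finset.mem_filter, Finset.mem_univ, true_and]
      rw [← mul_assoc, mul_inv_cancel₀ hb.1, one_mul]
    · rintro ⟨b, c⟩ hp
      simp only [Finset.mem_filter, Finset.mem_univ, true_and] at hp
      have hb : b ≠ 0 := by rintro rfl; rw [zero_mul] at hp; exact he hp.symm
      simp only [Prod.mk.injEq, true_and]
      rw [← hp, ← mul_assoc, inv_mul_cancel₀ hb, one_mul]
    · intro b hb; rfl

private lemma SL2aux_root_count_sum :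
    ∑ t : ZMod ℓ, (univ.filter (fun x : ZMod ℓ => x^2 - t*x + 1 = 0)).card = ℓ - 1 := by
  have : ∑ t : ZMod ℓ, (univ.filter (fun x : ZMod ℓ => x^2 - t*x + 1 = 0)).card
      = (univ.filter (fun q : ZMod ℓ × ZMod ℓ => q.2^2 - q.1*q.2 + 1 = 0)).card := by
    rw [Finset.card_filter, Fintype.sum_prod_type]
    simp_rw [Finset.card_filter]
  rw [this]
  rw [Finset.card_bij' (fun q _ => q.2) (fun x _ => (x + x⁻¹, x)) ?_ ?_ ?_ ?_
    (t := Finset.univ.erase 0)]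
  · rw [Finset.card_erase_of_mem (Finset.mem_univ _), Finset.card_univ, ZMod.card]
  · rintro ⟨t, x⟩ hq
    simp only [Finset.mem_filter, Finset.mem_univ, true_and] at hq
    simp only [Finset.mem_erase, Finset.mem_univ, and_true]
    rintro rfl
    simp only [ne_eq, zero_pow, mul_zero, sub_zero, zero_add] at hq
    simp at hq
  · intro x hx
    simp only [Finset.mem_erase, Finset.mem_univ, and_true] at hx
    simp only [Finset.mem_filter, Finset.mem_univ, true_and]
    field_simp
    ring
  · rintro ⟨t, x⟩ hq
    simp only [Finset.mem_filter, Finset.mem_univ, true_and] at hq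
    have hx : x ≠ 0 := by
      rintro rfl
      simp only [ne_eq, zero_pow, mul_zero, sub_zero, zero_add] at hq
      simp at hq
    simp only [Prod.mk.injEq, and_true]
    field_simp
    linear_combination hq
  · intro x hx; rfl

private lemma SL2aux_rt_eq (t : ZMod ℓ) (hc : ∃ x : ZMod ℓ, x^2 - t*x + 1 = 0) :
    (univ.filter (fun x : ZMod ℓ => x^2 - t*x + 1 = 0)).card
      = if t = 2 ∨ t = -2 then 1 else 2 := by
  split_ifs with ht
  · rcases ht with rfl | rfl
    · have hfe : (univ.filter (fun x : ZMod ℓ => x^2 - (2:ZMod ℓ)*x + 1 = 0)) = {1} := by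
        ext y
        simp only [Finset.mem_filter, Finset.mem_univ, true_and, Finset.mem_singleton]
        constructor
        · intro h
          have h2 : (y - 1)^2 = 0 := by linear_combination h
          exact sub_eq_zero.mp (sq_eq_zero_iff.mp h2)
        · rintro rfl; ring
      rw [hfe, Finset.card_singleton]
    · have hfe : (univ.filter (fun x : ZMod ℓ => x^2 - (-2:ZMod ℓ)*x + 1 = 0)) = {-1} := by
        ext y
        simp only [Finset.mem_filter, Finset.mem_univ, true_and, Finset.mem_singleton]
        constructor
        · intro h
          have h2 : (y + 1)^2 = 0 := by linear_combination h
          have := sq_eq_zero_iff.mp h2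
          linear_combination this
        · rintro rfl; ring
      rw [hfe, Finset.card_singleton]
  · obtain ⟨x, hx⟩ := hc
    push_neg at ht
    have hne : x ≠ t - x := by
      intro h
      have ht2 : t = 2*x := by linear_combination -h
      have hz : (x - 1) * (x + 1) = 0 := by linear_combination -hx - x*ht2
      rcases mul_eq_zero.mp hz with h1 | h1
      · exact ht.1 (by linear_combination ht2 + 2*h1)
      · exact ht.2 (by linear_combination ht2 + 2*h1)
    have hfe : (univ.filter (fun y : ZMod ℓ => y^2 - t*y + 1 = 0)) = {x, t - x} := by
      ext y
      simp only [Finset.mem_filter, Finset.mem_univ, true_and, Finset.mem_insert,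
        Finset.mem_singleton]
      constructor
      · intro hy
        have hz : (y - x) * (y - (t - x)) = 0 := by linear_combination hy - hx
        rcases mul_eq_zero.mp hz with h | h
        · exact Or.inl (sub_eq_zero.mp h)
        · exact Or.inr (sub_eq_zero.mp h)
      · rintro (rfl | rfl)
        · exact hx
        · linear_combination hx
    rw [hfe, Finset.card_insert_of_notMem (by simpa using hne), Finset.card_singleton]

private lemma SL2aux_Tcount (hodd : Odd ℓ) :
    2 * (univ.filter (fun t : ZMod ℓ => ∃ x : ZMod ℓ, x^2 - t*x + 1 = 0)).card = ℓ + 1 := by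
  classical
  set s := univ.filter (fun t : ZMod ℓ => ∃ x : ZMod ℓ, x^2 - t*x + 1 = 0) with hs
  have h2 : ∑ t ∈ s, (univ.filter (fun x : ZMod ℓ => x^2 - t*x + 1 = 0)).card
      = (ℓ - 1 : ℕ) := by
    rw [hs, Finset.sum_filter_of_ne, SL2aux_root_count_sum]
    intro t _ hne
    obtain ⟨x, hx⟩ := Finset.card_pos.mp (Nat.pos_of_ne_zero hne)
    exact ⟨x, (Finset.mem_filter.mp hx).2⟩
  have h3 : ∑ t ∈ s, (univ.filter (fun x : ZMod ℓ => x^2 - t*x + 1 = 0)).card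
      = ∑ t ∈ s, (if t = 2 ∨ t = -2 then 1 else 2) :=
    Finset.sum_congr rfl (fun t ht => SL2aux_rt_eq t (Finset.mem_filter.mp ht).2)
  have h4 : s.filter (fun t => t = 2 ∨ t = -2) = ({2, -2} : Finset (ZMod ℓ)) := by
    ext t
    simp only [Finset.mem_filter, hs, Finset.mem_univ, true_and, Finset.mem_insert,
      Finset.mem_singleton]
    constructor
    · exact fun h => h.2
    · rintro (rfl | rfl)
      · exact ⟨⟨1, by norm_num⟩, Or.inl rfl⟩
      · exact ⟨⟨-1, by ring_nf⟩, Or.inr rfl⟩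
  have h6 : ({2, -2} : Finset (ZMod ℓ)).card = 2 := by
    rw [Finset.card_insert_of_notMem (by simpa using SL2aux_two_ne_negTwo hodd),
      Finset.card_singleton]
  have h5 : ∑ t ∈ s, (if t = 2 ∨ t = -2 then 1 else 2) + 2 = 2 * s.card := by
    rw [Finset.sum_ite, Finset.sum_const, Finset.sum_const, smul_eq_mul, smul_eq_mul, h4, h6]
    have hsplit := Finset.card_filter_add_card_filter_not
      (s := s) (p := fun t => t = 2 ∨ t = -2)
    rw [h4, h6] at hsplit
    omega
  have hl : 1 ≤ ℓ := (Fact.out : Nat.Prime ℓ).pos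
  omega

private def SL2aux_mEquiv (ℓ : ℕ) :
    Matrix (Fin 2) (Fin 2) (ZMod ℓ) ≃ (ZMod ℓ × ZMod ℓ) × ZMod ℓ × ZMod ℓ where
  toFun A := ((A 0 0, A 1 1), A 0 1, A 1 0)
  invFun q := !![q.1.1, q.2.1; q.2.2, q.1.2]
  left_inv A := by
    ext i j
    fin_cases i <;> fin_cases j <;> simp [Matrix.cons_val_zero, Matrix.cons_val_one]
  right_inv q := by simp

private lemma SL2aux_count_engine (P : ZMod ℓ → Prop) [DecidablePred P] :
    Nat.card {A : Matrix (Fin 2) (Fin 2) (ZMod ℓ) // A.det = 1 ∧ P A.trace}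
      = (ℓ - 1) * (univ.filter (fun p : ZMod ℓ × ZMod ℓ => P (p.1 + p.2))).card
        + ℓ * (univ.filter (fun p : ZMod ℓ × ZMod ℓ => p.1 * p.2 = 1 ∧ P (p.1 + p.2))).card := by
  classical
  have hl : 1 ≤ ℓ := (Fact.out : Nat.Prime ℓ).pos
  rw [Nat.card_eq_fintype_card,
    Fintype.card_congr (Equiv.subtypeEquiv (SL2aux_mEquiv ℓ) (fun A => ?_)
      (q := fun q : (ZMod ℓ × ZMod ℓ) × ZMod ℓ × ZMod ℓ =>
        q.2.1 * q.2.2 = q.1.1 * q.1.2 - 1 ∧ P (q.1.1 + q.1.2))),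
    Fintype.card_subtype]
  · rw [Finset.card_eq_sum_card_fiberwise
      (f := fun q : (ZMod ℓ × ZMod ℓ) × ZMod ℓ × ZMod ℓ => q.1) (t := univ)
      (fun _ _ => Finset.mem_univ _)]
    have hfib : ∀ ad : ZMod ℓ × ZMod ℓ,
        ((univ.filter (fun q : (ZMod ℓ × ZMod ℓ) × ZMod ℓ × ZMod ℓ =>
          q.2.1 * q.2.2 = q.1.1 * q.1.2 - 1 ∧ P (q.1.1 + q.1.2))).filter
            (fun q => q.1 = ad)).card
        = (if P (ad.1 + ad.2) then 1 else 0) * (ℓ - 1)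
          + (if ad.1 * ad.2 = 1 ∧ P (ad.1 + ad.2) then 1 else 0) * ℓ := by
      intro ad
      have : ((univ.filter (fun q : (ZMod ℓ × ZMod ℓ) × ZMod ℓ × ZMod ℓ =>
          q.2.1 * q.2.2 = q.1.1 * q.1.2 - 1 ∧ P (q.1.1 + q.1.2))).filter
            (fun q => q.1 = ad))
          = {ad} ×ˢ (univ.filter (fun bc : ZMod ℓ × ZMod ℓ =>
              bc.1 * bc.2 = ad.1 * ad.2 - 1 ∧ P (ad.1 + ad.2))) := by
        ext q
        simp only [Finset.mem_filter, Finset.mem_univ, true_and, Finset.mem_product,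
          Finset.mem_singleton]
        constructor
        · rintro ⟨⟨h1, h2⟩, rfl⟩; exact ⟨rfl, h1, h2⟩
        · rintro ⟨rfl, h1, h2⟩; exact ⟨⟨h1, h2⟩, rfl⟩
      rw [this, Finset.card_product, Finset.card_singleton, one_mul]
      by_cases hP : P (ad.1 + ad.2)
      · simp only [hP, and_true, if_true]
        rw [Finset.filter_congr (fun p _ => by simp [hP])
          (q := fun bc : ZMod ℓ × ZMod ℓ => bc.1 * bc.2 = ad.1 * ad.2 - 1)]
        rw [SL2aux_pair_count (ad.1 * ad.2 - 1)]
        rcases eq_or_ne (ad.1 * ad.2) 1 with h1 | h1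
        · rw [if_pos (by rw [h1, sub_self]), if_pos h1]
          omega
        · rw [if_neg (fun hc => h1 (by linear_combination hc)), if_neg h1]
          omega
      · simp only [hP, and_false, if_false]
        rw [Finset.filter_false_of_mem (fun p _ => by simp [hP]), Finset.card_empty]
        simp
    rw [Finset.sum_congr rfl (fun ad _ => hfib ad), Finset.sum_add_distrib]
    congr 1
    · rw [← Finset.sum_mul, mul_comm]
      congr 1
      rw [Finset.card_filter]
    · rw [← Finset.sum_mul, mul_comm]
      congr 1
      rw [Finset.card_filter]
  · rw [Matrix.det_fin_two, Matrix.trace_fin_two]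
    show _ ↔ (A 0 1 * A 1 0 = A 0 0 * A 1 1 - 1 ∧ P (A 0 0 + A 1 1))
    constructor
    · rintro ⟨h1, h2⟩; exact ⟨by linear_combination -h1, h2⟩
    · rintro ⟨h1, h2⟩; exact ⟨by linear_combination -h1, h2⟩

private lemma SL2aux_charpoly_iff (A : Matrix (Fin 2) (Fin 2) (ZMod ℓ)) (h : A.det = 1)
    (a : ZMod ℓ) : A.charpoly.IsRoot a ↔ a^2 - A.trace * a + 1 = 0 := by
  rw [Matrix.charpoly, Matrix.det_fin_two, Matrix.charmatrix_apply_eq, Matrix.charmatrix_apply_eq,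
    Matrix.charmatrix_apply_ne _ _ _ (by decide), Matrix.charmatrix_apply_ne _ _ _ (by decide)]
  rw [Matrix.det_fin_two] at h
  rw [Matrix.trace_fin_two]
  simp only [Polynomial.IsRoot, Polynomial.eval_add, Polynomial.eval_sub, Polynomial.eval_mul,
    Polynomial.eval_neg, Polynomial.eval_C, Polynomial.eval_X]
  constructor <;> intro hr
  · linear_combination hr - h
  · linear_combination hr + h

private lemma SL2aux_C1 (hodd : Odd ℓ) :
    2 * (univ.filter (fun p : ZMod ℓ × ZMod ℓ =>
        ∃ x : ZMod ℓ, x^2 - (p.1 + p.2)*x + 1 = 0)).card = ℓ * (ℓ + 1) := by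
  classical
  have : (univ.filter (fun p : ZMod ℓ × ZMod ℓ =>
        ∃ x : ZMod ℓ, x^2 - (p.1 + p.2)*x + 1 = 0)).card
      = ℓ * (univ.filter (fun t : ZMod ℓ => ∃ x : ZMod ℓ, x^2 - t*x + 1 = 0)).card := by
    rw [Finset.card_filter, Fintype.sum_prod_type]
    have hinner : ∀ a : ZMod ℓ,
        (∑ d : ZMod ℓ, if ∃ x : ZMod ℓ, x^2 - (a + d)*x + 1 = 0 then 1 else 0)
        = ∑ t : ZMod ℓ, if ∃ x : ZMod ℓ, x^2 - t*x + 1 = 0 then 1 else 0 := by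
      intro a
      exact Fintype.sum_equiv (Equiv.addLeft a) _ _ (fun d => rfl)
    rw [Finset.sum_congr rfl (fun a _ => hinner a), Finset.sum_const, Finset.card_univ,
      ZMod.card, smul_eq_mul, Finset.card_filter]
  rw [this, ← mul_assoc, mul_comm 2 ℓ, mul_assoc, SL2aux_Tcount hodd]

private lemma SL2aux_C2 :
    (univ.filter (fun p : ZMod ℓ × ZMod ℓ => p.1 * p.2 = 1 ∧
        ∃ x : ZMod ℓ, x^2 - (p.1 + p.2)*x + 1 = 0)).card = ℓ - 1 := by
  classical
  have : (univ.filter (fun p : ZMod ℓ × ZMod ℓ => p.1 * p.2 = 1 ∧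
        ∃ x : ZMod ℓ, x^2 - (p.1 + p.2)*x + 1 = 0))
      = (univ.filter (fun p : ZMod ℓ × ZMod ℓ => p.1 * p.2 = 1)) := by
    apply Finset.filter_congr
    intro p _
    constructor
    · exact fun h => h.1
    · intro h
      exact ⟨h, ⟨p.1, by linear_combination -h⟩⟩
  rw [this, SL2aux_pair_count (1 : ZMod ℓ), if_neg one_ne_zero]

end Aux

theorem stmt_7 (ℓ : ℕ) [Fact (Nat.Prime ℓ)] (hodd : Odd ℓ) :
    (Nat.card {γ : Matrix.SpecialLinearGroup (Fin 2) (ZMod ℓ) //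
        ∃ a : ZMod ℓ, (Matrix.charpoly (γ : Matrix (Fin 2) (Fin 2) (ZMod ℓ))).IsRoot a} : ℚ) /
      (Nat.card (Matrix.SpecialLinearGroup (Fin 2) (ZMod ℓ)) : ℚ) =
    ((ℓ : ℚ) + 3) / (2 * ((ℓ : ℚ) + 1)) := by
  classical
  have hp : Nat.Prime ℓ := Fact.out
  have hl3 : 3 ≤ ℓ := by
    have := hp.two_le
    rcases Nat.odd_iff.mp hodd with h
    omega
  -- cardinality of SL₂
  have hSL : Nat.card (Matrix.SpecialLinearGroup (Fin 2) (ZMod ℓ))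
      = (ℓ - 1) * (ℓ * ℓ) + ℓ * (ℓ - 1) := by
    have he : Matrix.SpecialLinearGroup (Fin 2) (ZMod ℓ)
        ≃ {A : Matrix (Fin 2) (Fin 2) (ZMod ℓ) // A.det = 1 ∧ (fun _ : ZMod ℓ => True) A.trace} :=
      { toFun := fun γ => ⟨γ.1, γ.2, trivial⟩
        invFun := fun A => ⟨A.1, A.2.1⟩
        left_inv := fun γ => rfl
        right_inv := fun A => rfl }
    rw [Nat.card_congr he, SL2aux_count_engine (fun _ : ZMod ℓ => True)]
    congr 1
    · congr 1
      rw [Finset.filter_true, Finset.card_univ, Fintype.card_prod, ZMod.card]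
    · congr 1
      have : (univ.filter (fun p : ZMod ℓ × ZMod ℓ => p.1 * p.2 = 1 ∧ True))
          = (univ.filter (fun p : ZMod ℓ × ZMod ℓ => p.1 * p.2 = 1)) := by
        simp
      rw [this, SL2aux_pair_count (1 : ZMod ℓ), if_neg one_ne_zero]
  -- cardinality of the eigenvalue subset
  have hS : Nat.card {γ : Matrix.SpecialLinearGroup (Fin 2) (ZMod ℓ) //
        ∃ a : ZMod ℓ, (Matrix.charpoly (γ : Matrix (Fin 2) (Fin 2) (ZMod ℓ))).IsRoot a}
      = (ℓ - 1) * (univ.filter (fun p : ZMod ℓ × ZMod ℓ =>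
          ∃ x : ZMod ℓ, x^2 - (p.1 + p.2)*x + 1 = 0)).card + ℓ * (ℓ - 1) := by
    have he : {γ : Matrix.SpecialLinearGroup (Fin 2) (ZMod ℓ) //
          ∃ a : ZMod ℓ, (Matrix.charpoly (γ : Matrix (Fin 2) (Fin 2) (ZMod ℓ))).IsRoot a}
        ≃ {A : Matrix (Fin 2) (Fin 2) (ZMod ℓ) // A.det = 1 ∧
            (fun t : ZMod ℓ => ∃ x : ZMod ℓ, x^2 - t*x + 1 = 0) A.trace} :=
      { toFun := fun γ => ⟨γ.1.1, γ.1.2,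
          (exists_congr (SL2aux_charpoly_iff γ.1.1 γ.1.2)).mp γ.2⟩
        invFun := fun A => ⟨⟨A.1, A.2.1⟩,
          (exists_congr (SL2aux_charpoly_iff A.1 A.2.1)).mpr A.2.2⟩
        left_inv := fun γ => rfl
        right_inv := fun A => rfl }
    rw [Nat.card_congr he,
      SL2aux_count_engine (fun t : ZMod ℓ => ∃ x : ZMod ℓ, x^2 - t*x + 1 = 0), SL2aux_C2]
  have hC1 := SL2aux_C1 (ℓ := ℓ) hodd
  -- now pure arithmetic over ℚ
  set T := (univ.filter (fun p : ZMod ℓ × ZMod ℓ =>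
      ∃ x : ZMod ℓ, x^2 - (p.1 + p.2)*x + 1 = 0)).card with hT
  rw [hS, hSL]
  have h1 : (1 : ℕ) ≤ ℓ := by omega
  push_cast [Nat.cast_sub h1]
  have hTQ : 2 * (T : ℚ) = (ℓ : ℚ) * ((ℓ : ℚ) + 1) := by exact_mod_cast hC1
  have hLQ : (3 : ℚ) ≤ (ℓ : ℚ) := by exact_mod_cast hl3
  rw [div_eq_div_iff (by nlinarith) (by nlinarith)]
  ring_nf
  nlinarith [hTQ, hLQ]
end

section
/- Let ℓ be an odd prime. The proportion of matrices in GL₂(𝔽_ℓ) having an eigenvalue in 𝔽_ℓ equals (ℓ+2)/(2(ℓ+1)). -/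
open Finset

set_option linter.unusedSectionVars false
set_option maxHeartbeats 1000000

section Aux

variable {F : Type*} [Field F] [Fintype F] [DecidableEq F]

local notation "q" => Fintype.card F

private def hcnt (D : F) : ℕ :=
  (univ.filter fun m : F => (∃ y : F, y * y = D) ∧ m * m ≠ D).card

private def rcnt (D : F) : ℕ := (univ.filter fun m : F => m * m = D).card

private def sqc (F : Type*) [Field F] [Fintype F] [DecidableEq F] : ℕ :=
  (univ.filter fun D : F => ∃ y : F, y * y = D).card

private lemma hcnt_zero : hcnt (0 : F) = q - 1 := by
  unfold hcnt
  have : (univ.filter fun m : F => (∃ y : F, y * y = (0:F)) ∧ m * m ≠ 0) =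
      (univ.filter fun m : F => m ≠ 0) := by
    apply Finset.filter_congr
    intro m _
    simp [mul_self_eq_zero]
  rw [this, Finset.filter_ne', Finset.card_erase_of_mem (mem_univ _), Finset.card_univ]

private lemma rcnt_sq (h2 : (2:F) ≠ 0) {t : F} (ht : t ≠ 0) : rcnt (t * t) = 2 := by
  unfold rcnt
  have hset : (univ.filter fun m : F => m * m = t * t) = {t, -t} := by
    ext m
    simp [mul_self_eq_mul_self_iff]
  have htt : t ≠ -t := fun h => ht (by
    have : (2:F) * t = 0 := by linear_combination h
    rcases mul_eq_zero.mp this with h' | h'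
    · exact absurd h' h2
    · exact h')
  rw [hset, Finset.card_pair htt]

private lemma hcnt_sq (h2 : (2:F) ≠ 0) {t : F} (ht : t ≠ 0) : hcnt (t * t) = q - 2 := by
  unfold hcnt
  have hset : (univ.filter fun m : F => (∃ y : F, y * y = t * t) ∧ m * m ≠ t * t) =
      univ \ {t, -t} := by
    ext m
    simp [mul_self_eq_mul_self_iff, not_or]
  have htt : t ≠ -t := fun h => ht (by
    have : (2:F) * t = 0 := by linear_combination h
    rcases mul_eq_zero.mp this with h' | h'
    · exact absurd h' h2
    · exact h')
  rw [hset, Finset.card_sdiff_of_subset (by simp), Finset.card_pair htt, Finset.card_univ]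

private lemma hcnt_notsq {D : F} (h : ¬ ∃ y : F, y * y = D) : hcnt D = 0 := by
  unfold hcnt
  rw [Finset.card_eq_zero, Finset.filter_eq_empty_iff]
  intro m _
  simp [h]

private lemma rcnt_notsq {D : F} (h : ¬ ∃ y : F, y * y = D) : rcnt D = 0 := by
  unfold rcnt
  rw [Finset.card_eq_zero, Finset.filter_eq_empty_iff]
  intro m _
  exact fun hm => h ⟨m, hm⟩

private lemma rcnt_zero : rcnt (0 : F) = 1 := by
  unfold rcnt
  have : (univ.filter fun m : F => m * m = (0:F)) = {0} := by
    ext m; simp [mul_self_eq_zero]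
  rw [this, Finset.card_singleton]

private lemma sqc_pos : 1 ≤ sqc F :=
  Finset.card_pos.mpr ⟨0, by simp⟩

private lemma mem_sq_filter : (0:F) ∈ univ.filter fun D : F => ∃ y : F, y * y = D := by simp

private lemma two_sqc (h2 : (2:F) ≠ 0) : 2 * sqc F = q + 1 := by
  have hq : Fintype.card F = ∑ D : F, rcnt D := by
    rw [← Finset.card_univ]
    exact Finset.card_eq_sum_card_fiberwise (f := fun m : F => m * m)
      (fun m _ => mem_univ (m * m))
  rw [← Finset.add_sum_erase _ _ (mem_univ (0:F)), rcnt_zero] at hq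
  have hsum : ∑ D ∈ univ.erase (0:F), rcnt D = 2 * (sqc F - 1) := by
    have hcong : ∀ D ∈ univ.erase (0:F), rcnt D =
        if (∃ y : F, y * y = D) then 2 else 0 := by
      intro D hD
      have hD0 : D ≠ 0 := Finset.ne_of_mem_erase hD
      by_cases hE : ∃ y : F, y * y = D
      · obtain ⟨y, hy⟩ := hE
        have hy0 : y ≠ 0 := fun h => hD0 (by rw [← hy, h, mul_zero])
        rw [if_pos ⟨y, hy⟩, ← hy, rcnt_sq h2 hy0]
      · rw [if_neg hE, rcnt_notsq hE]
    rw [Finset.sum_congr rfl hcong, ← Finset.sum_filter, Finset.sum_const,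
      Finset.filter_erase, Finset.card_erase_of_mem (mem_sq_filter), smul_eq_mul]
    have := sqc_pos (F := F)
    unfold sqc at *
    omega
  rw [hsum] at hq
  have := sqc_pos (F := F)
  omega

private lemma S_val (h2 : (2:F) ≠ 0) :
    ∑ D : F, hcnt D = (q - 1) + (sqc F - 1) * (q - 2) := by
  rw [← Finset.add_sum_erase _ _ (mem_univ (0:F)), hcnt_zero]
  congr 1
  have hcong : ∀ D ∈ univ.erase (0:F), hcnt D =
      if (∃ y : F, y * y = D) then q - 2 else 0 := by
    intro D hD
    have hD0 : D ≠ 0 := Finset.ne_of_mem_erase hD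
    by_cases hE : ∃ y : F, y * y = D
    · obtain ⟨y, hy⟩ := hE
      have hy0 : y ≠ 0 := fun h => hD0 (by rw [← hy, h, mul_zero])
      rw [if_pos ⟨y, hy⟩, ← hy, hcnt_sq h2 hy0]
    · rw [if_neg hE, hcnt_notsq hE]
  rw [Finset.sum_congr rfl hcong, ← Finset.sum_filter, Finset.sum_const,
    Finset.filter_erase, Finset.card_erase_of_mem (mem_sq_filter), smul_eq_mul]
  rfl

private lemma innerSumAux (h2 : (2:F) ≠ 0) (s : F) :
    ∑ b : F, ∑ c : F, hcnt (s * s + b * c) =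
      q * hcnt (s * s) + (q - 1) * (∑ D : F, hcnt D) := by
  rw [← Finset.add_sum_erase _ _ (mem_univ (0:F))]
  congr 1
  · simp [Finset.sum_const, Finset.card_univ, mul_comm]
  · have hcong : ∀ b ∈ univ.erase (0:F),
        (∑ c : F, hcnt (s * s + b * c)) = ∑ D : F, hcnt D := by
      intro b hb
      have hb0 : b ≠ 0 := Finset.ne_of_mem_erase hb
      exact Equiv.sum_comp ((Equiv.mulLeft₀ b hb0).trans (Equiv.addLeft (s * s))) hcnt
    rw [Finset.sum_congr rfl hcong, Finset.sum_const,
      Finset.card_erase_of_mem (mem_univ _), Finset.card_univ, smul_eq_mul]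

private lemma sum_hcnt_sq (h2 : (2:F) ≠ 0) :
    ∑ s : F, hcnt (s * s) = (q - 1) + (q - 1) * (q - 2) := by
  rw [← Finset.add_sum_erase _ _ (mem_univ (0:F)), mul_zero, hcnt_zero]
  congr 1
  have hcong : ∀ s ∈ univ.erase (0:F), hcnt (s * s) = q - 2 := fun s hs =>
    hcnt_sq h2 (Finset.ne_of_mem_erase hs)
  rw [Finset.sum_congr rfl hcong, Finset.sum_const,
    Finset.card_erase_of_mem (mem_univ _), Finset.card_univ, smul_eq_mul]

private lemma card_filter_prod {α β : Type*} [Fintype α] [Fintype β] (p : α × β → Prop)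
    [DecidablePred p] :
    (univ.filter p).card = ∑ a : α, (univ.filter fun b => p (a, b)).card := by
  rw [Finset.card_filter, Fintype.sum_prod_type]
  exact Finset.sum_congr rfl fun a _ => (Finset.card_filter _ _).symm

private def matEquiv (h2 : (2:F) ≠ 0) : ((F × F × F) × F) ≃ Matrix (Fin 2) (Fin 2) F where
  toFun x := !![x.2 + x.1.1, x.1.2.1; x.1.2.2, x.2 - x.1.1]
  invFun M := (((M 0 0 - M 1 1) * (2:F)⁻¹, M 0 1, M 1 0), (M 0 0 + M 1 1) * (2:F)⁻¹)
  left_inv x := by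
    obtain ⟨⟨s, b, c⟩, m⟩ := x
    simp only [Prod.mk.injEq]
    refine ⟨⟨?_, rfl, rfl⟩, ?_⟩ <;>
      (simp only [Matrix.of_apply, Matrix.cons_val', Matrix.cons_val_zero, Matrix.cons_val_one,
          Matrix.empty_val', Matrix.cons_val_fin_one, Matrix.head_cons]
       field_simp
       ring)
  right_inv M := by
    ext i j
    fin_cases i <;> fin_cases j <;> simp <;> field_simp <;> ring

private lemma charpoly_root_iff' (M : Matrix (Fin 2) (Fin 2) F) (z : F) :
    M.charpoly.IsRoot z ↔ (z - M 0 0) * (z - M 1 1) - M 0 1 * M 1 0 = 0 := by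
  rw [Matrix.charpoly, Matrix.det_fin_two]
  rw [Matrix.charmatrix_apply_eq, Matrix.charmatrix_apply_eq,
    Matrix.charmatrix_apply_ne _ _ _ (by decide), Matrix.charmatrix_apply_ne _ _ _ (by decide)]
  simp [Polynomial.IsRoot]

private lemma pred_iff (h2 : (2:F) ≠ 0) (x : (F × F × F) × F) :
    ((matEquiv h2 x).det ≠ 0 ∧ ∃ a : F, ((matEquiv h2 x).charpoly).IsRoot a) ↔
      ((∃ y : F, y * y = x.1.1 * x.1.1 + x.1.2.1 * x.1.2.2) ∧
        x.2 * x.2 ≠ x.1.1 * x.1.1 + x.1.2.1 * x.1.2.2) := by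
  obtain ⟨⟨s, b, c⟩, m⟩ := x
  have hdet : (matEquiv h2 ((s,b,c),m)).det = m * m - (s * s + b * c) := by
    simp [matEquiv, Matrix.det_fin_two_of]; ring
  have hroot : ∀ z : F, ((matEquiv h2 ((s,b,c),m)).charpoly).IsRoot z ↔
      (z - (m + s)) * (z - (m - s)) - b * c = 0 := by
    intro z
    rw [charpoly_root_iff']
    simp [matEquiv]
  constructor
  · rintro ⟨hd, a, ha⟩
    rw [hroot a] at ha
    refine ⟨⟨a - m, by linear_combination ha⟩, ?_⟩
    rw [hdet] at hd
    exact fun h => hd (by rw [h]; ring)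
  · rintro ⟨⟨y, hy⟩, hm⟩
    refine ⟨?_, ⟨y + m, ?_⟩⟩
    · rw [hdet]
      exact sub_ne_zero.mpr hm
    · rw [hroot]
      linear_combination hy

private noncomputable def glEquiv :
    {γ : GL (Fin 2) F // ∃ a : F, ((γ : Matrix (Fin 2) (Fin 2) F).charpoly).IsRoot a} ≃
    {M : Matrix (Fin 2) (Fin 2) F // M.det ≠ 0 ∧ ∃ a : F, (M.charpoly).IsRoot a} where
  toFun γ := ⟨(γ.1 : Matrix (Fin 2) (Fin 2) F),
    ⟨((Matrix.isUnit_iff_isUnit_det _).mp γ.1.isUnit).ne_zero, γ.2⟩⟩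
  invFun M := ⟨((Matrix.isUnit_iff_isUnit_det M.1).mpr (isUnit_iff_ne_zero.mpr M.2.1)).unit,
    by rw [IsUnit.unit_spec]; exact M.2.2⟩
  left_inv γ := Subtype.ext (Units.ext (by simp))
  right_inv M := Subtype.ext (by simp)

end Aux

theorem stmt_8 (ℓ : ℕ) [Fact (Nat.Prime ℓ)] (hodd : Odd ℓ) :
    (Nat.card {γ : GL (Fin 2) (ZMod ℓ) //
        ∃ a : ZMod ℓ, (Matrix.charpoly ((γ : Matrix (Fin 2) (Fin 2) (ZMod ℓ)))).IsRoot a} : ℚ) /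
      (Nat.card (GL (Fin 2) (ZMod ℓ)) : ℚ) =
    ((ℓ : ℚ) + 2) / (2 * ((ℓ : ℚ) + 1)) := by
  have hp : ℓ.Prime := Fact.out
  have hl2 : ℓ ≠ 2 := by
    rintro rfl
    exact (by norm_num : ¬ Odd 2) hodd
  have hl3 : 3 ≤ ℓ := by
    have := hp.two_le
    rcases hodd with ⟨k, hk⟩
    omega
  have h2 : (2 : ZMod ℓ) ≠ 0 := by
    intro h
    have h' : ((2 : ℕ) : ZMod ℓ) = 0 := by exact_mod_cast h
    have : ℓ ∣ 2 := (ZMod.natCast_eq_zero_iff 2 ℓ).mp h'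
    exact hl2 ((Nat.prime_dvd_prime_iff_eq hp Nat.prime_two).mp this)
  have hcard : Fintype.card (ZMod ℓ) = ℓ := ZMod.card ℓ
  -- cardinality of GL₂
  have hGL : Nat.card (GL (Fin 2) (ZMod ℓ)) = (ℓ^2 - 1) * (ℓ^2 - ℓ) := by
    rw [Matrix.card_GL_field, Fin.prod_univ_two]
    simp [hcard]
  -- cardinality of the subset
  set S : ℕ := ∑ D : ZMod ℓ, hcnt D with hSdef
  have hN : Nat.card {γ : GL (Fin 2) (ZMod ℓ) //
      ∃ a : ZMod ℓ, (Matrix.charpoly ((γ : Matrix (Fin 2) (Fin 2) (ZMod ℓ)))).IsRoot a} =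
      (univ.filter fun x : ((ZMod ℓ) × (ZMod ℓ) × (ZMod ℓ)) × (ZMod ℓ) =>
        (∃ y : ZMod ℓ, y * y = x.1.1 * x.1.1 + x.1.2.1 * x.1.2.2) ∧
          x.2 * x.2 ≠ x.1.1 * x.1.1 + x.1.2.1 * x.1.2.2).card := by
    rw [Nat.card_congr (glEquiv.trans
      ((Equiv.subtypeEquiv (matEquiv h2) (fun x => Iff.rfl)).symm.trans
        (Equiv.subtypeEquivRight (pred_iff h2))))]
    rw [Nat.card_eq_fintype_card, Fintype.card_subtype]
  have hNsum : (univ.filter fun x : ((ZMod ℓ) × (ZMod ℓ) × (ZMod ℓ)) × (ZMod ℓ) =>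
        (∃ y : ZMod ℓ, y * y = x.1.1 * x.1.1 + x.1.2.1 * x.1.2.2) ∧
          x.2 * x.2 ≠ x.1.1 * x.1.1 + x.1.2.1 * x.1.2.2).card =
      ℓ * ((ℓ - 1) + (ℓ - 1) * (ℓ - 2)) + ℓ * ((ℓ - 1) * S) := by
    rw [card_filter_prod]
    have step1 : ∀ v : (ZMod ℓ) × (ZMod ℓ) × (ZMod ℓ),
        (univ.filter fun m : ZMod ℓ =>
          (∃ y : ZMod ℓ, y * y = v.1 * v.1 + v.2.1 * v.2.2) ∧
            m * m ≠ v.1 * v.1 + v.2.1 * v.2.2).card = hcnt (v.1 * v.1 + v.2.1 * v.2.2) :=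
      fun v => rfl
    calc ∑ v : (ZMod ℓ) × (ZMod ℓ) × (ZMod ℓ), (univ.filter fun m : ZMod ℓ =>
          (∃ y : ZMod ℓ, y * y = v.1 * v.1 + v.2.1 * v.2.2) ∧
            m * m ≠ v.1 * v.1 + v.2.1 * v.2.2).card
        = ∑ v : (ZMod ℓ) × (ZMod ℓ) × (ZMod ℓ), hcnt (v.1 * v.1 + v.2.1 * v.2.2) := by
          exact Finset.sum_congr rfl fun v _ => step1 v
      _ = ∑ s : ZMod ℓ, ∑ b : ZMod ℓ, ∑ c : ZMod ℓ, hcnt (s * s + b * c) := by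
          rw [Fintype.sum_prod_type]
          exact Finset.sum_congr rfl fun s _ => Fintype.sum_prod_type _
      _ = ∑ s : ZMod ℓ, (ℓ * hcnt (s * s) + (ℓ - 1) * S) := by
          refine Finset.sum_congr rfl fun s _ => ?_
          rw [innerSumAux h2 s, hcard]
      _ = ℓ * ((ℓ - 1) + (ℓ - 1) * (ℓ - 2)) + ℓ * ((ℓ - 1) * S) := by
          rw [Finset.sum_add_distrib, ← Finset.mul_sum, Finset.sum_const, Finset.card_univ,
            hcard, smul_eq_mul]
          congr 1
          rw [sum_hcnt_sq h2, hcard]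
  have hS : S = (ℓ - 1) + (sqc (ZMod ℓ) - 1) * (ℓ - 2) := by
    rw [hSdef, S_val h2, hcard]
  have hsq : 2 * sqc (ZMod ℓ) = ℓ + 1 := by
    rw [two_sqc h2, hcard]
  have hsq1 : 1 ≤ sqc (ZMod ℓ) := sqc_pos
  -- now pure rational arithmetic
  rw [hN, hNsum, hGL]
  have c1 : ((ℓ - 1 : ℕ) : ℚ) = (ℓ : ℚ) - 1 := by
    rw [Nat.cast_sub (by omega)]; norm_num
  have c2 : ((ℓ - 2 : ℕ) : ℚ) = (ℓ : ℚ) - 2 := by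
    rw [Nat.cast_sub (by omega)]; norm_num
  have cs : ((sqc (ZMod ℓ) - 1 : ℕ) : ℚ) = (sqc (ZMod ℓ) : ℚ) - 1 := by
    rw [Nat.cast_sub hsq1]; norm_num
  have cp1 : ((ℓ^2 - 1 : ℕ) : ℚ) = (ℓ : ℚ)^2 - 1 := by
    rw [Nat.cast_sub (by nlinarith)]; push_cast; ring
  have cp2 : ((ℓ^2 - ℓ : ℕ) : ℚ) = (ℓ : ℚ)^2 - (ℓ : ℚ) := by
    rw [Nat.cast_sub (by nlinarith)]; push_cast; ring
  have hsqQ : (sqc (ZMod ℓ) : ℚ) = ((ℓ : ℚ) + 1) / 2 := by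
    have : ((2 * sqc (ZMod ℓ) : ℕ) : ℚ) = ((ℓ + 1 : ℕ) : ℚ) := by rw [hsq]
    push_cast at this
    linarith
  have hSQ : ((S : ℕ) : ℚ) = ((ℓ : ℚ) - 1) * (ℓ : ℚ) / 2 := by
    rw [hS]
    push_cast [c1, c2, cs, hsqQ]
    ring
  have hx3 : (3 : ℚ) ≤ (ℓ : ℚ) := by exact_mod_cast hl3
  have hne1 : (ℓ : ℚ)^2 - 1 ≠ 0 := by nlinarith
  have hne2 : (ℓ : ℚ)^2 - (ℓ : ℚ) ≠ 0 := by nlinarith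
  have hne3 : 2 * ((ℓ : ℚ) + 1) ≠ 0 := by nlinarith
  push_cast [c1, c2, cp1, cp2, hSQ]
  rw [div_eq_div_iff (by exact mul_ne_zero hne1 hne2) hne3]
  ring
end

section
/- Let ℓ be an odd prime and G ⊆ GL₂(𝔽_ℓ) a subgroup contained in the normalizer of the split Cartan subgroup but not in the split Cartan subgroup itself. Then the proportion of matrices in G with an eigenvalue in 𝔽_ℓ lies in the set {1/2, 3/4, 1}. -/
open Matrix Polynomial Finset

lemma cp_eval_aux {R : Type*} [CommRing R] (M : Matrix (Fin 2) (Fin 2) R) (a : R) :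
    (M.charpoly).eval a = (a - M 0 0) * (a - M 1 1) - M 0 1 * M 1 0 := by
  rw [Matrix.charpoly, Matrix.det_fin_two, Matrix.charmatrix_apply_eq, Matrix.charmatrix_apply_eq,
    Matrix.charmatrix_apply_ne _ _ _ (by decide), Matrix.charmatrix_apply_ne _ _ _ (by decide)]
  simp only [eval_sub, eval_mul, eval_X, eval_C, eval_neg]
  ring

lemma isDiag2_aux {R : Type*} [Zero R] {A : Matrix (Fin 2) (Fin 2) R} (h1 : A 0 1 = 0)
    (h2 : A 1 0 = 0) : A.IsDiag := by
  intro i j hij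
  fin_cases i <;> fin_cases j <;> simp_all

theorem stmt_10 (ℓ : ℕ) [Fact (Nat.Prime ℓ)] (hodd : Odd ℓ)
    (G : Subgroup (GL (Fin 2) (ZMod ℓ)))
    (hnorm : ∀ γ ∈ G, Matrix.IsDiag ((γ : Matrix (Fin 2) (Fin 2) (ZMod ℓ))) ∨
      (((γ : Matrix (Fin 2) (Fin 2) (ZMod ℓ))) 0 0 = 0 ∧
        ((γ : Matrix (Fin 2) (Fin 2) (ZMod ℓ))) 1 1 = 0))
    (hnot : ∃ γ ∈ G, ¬ Matrix.IsDiag ((γ : Matrix (Fin 2) (Fin 2) (ZMod ℓ)))) :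
    (Nat.card {γ : G // ∃ a : ZMod ℓ,
        (Matrix.charpoly (((γ : GL (Fin 2) (ZMod ℓ)) :
          Matrix (Fin 2) (Fin 2) (ZMod ℓ)))).IsRoot a} : ℚ) / (Nat.card G : ℚ) ∈
      ({1 / 2, 3 / 4, 1} : Set ℚ) := by
  classical
  haveI : Fintype ↥G := Fintype.ofFinite _
  have h2 : ringChar (ZMod ℓ) ≠ 2 := by
    rw [ZMod.ringChar_zmod_n]
    rintro rfl
    simp [Nat.odd_iff] at hodd
  set m : ↥G → Matrix (Fin 2) (Fin 2) (ZMod ℓ) :=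
    fun γ => ((γ : GL (Fin 2) (ZMod ℓ)) : Matrix (Fin 2) (Fin 2) (ZMod ℓ)) with hm
  have hmmul : ∀ γ δ : ↥G, m (γ * δ) = m γ * m δ := fun γ δ => rfl
  have hmone : m 1 = 1 := rfl
  have hmul2 : ∀ (A B : Matrix (Fin 2) (Fin 2) (ZMod ℓ)) (i j : Fin 2),
      (A * B) i j = A i 0 * B 0 j + A i 1 * B 1 j := by
    intro A B i j
    simp [Matrix.mul_apply, Fin.sum_univ_two]
  have hdetu : ∀ γ : ↥G, IsUnit (m γ).det := fun γ =>
    Matrix.isUnits_det_units (γ : GL (Fin 2) (ZMod ℓ))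
  have hdich : ∀ γ : ↥G, (m γ).IsDiag ∨ ((m γ) 0 0 = 0 ∧ (m γ) 1 1 = 0) := fun γ =>
    hnorm γ γ.2
  -- an "antidiagonal" element is not diagonal
  have hAnd : ∀ γ : ↥G, (m γ) 0 0 = 0 → (m γ) 1 1 = 0 → ¬ (m γ).IsDiag := by
    intro γ h0 h1 hd
    have : (m γ).det = 0 := by
      rw [Matrix.det_fin_two, h0, hd (show (0:Fin 2) ≠ 1 by decide)]
      ring
    exact (hdetu γ).ne_zero this
  -- not diagonal implies antidiagonal
  have hND : ∀ γ : ↥G, ¬ (m γ).IsDiag → (m γ) 0 0 = 0 ∧ (m γ) 1 1 = 0 := fun γ h =>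
    (hdich γ).resolve_left h
  -- inverse of an antidiagonal element is antidiagonal (i.e. not diagonal)
  have hinv : ∀ γ : ↥G, ¬ (m γ).IsDiag → ¬ (m γ⁻¹).IsDiag := by
    intro γ h hcon
    obtain ⟨h0, h1⟩ := hND γ h
    have he : (m γ * m γ⁻¹) 0 0 = 1 := by
      rw [← hmmul, mul_inv_cancel]
      rfl
    rw [hmul2, h0, hcon (show (1:Fin 2) ≠ 0 by decide)] at he
    simp at he
  -- inverse of a diagonal element is diagonal
  have hinvD : ∀ γ : ↥G, (m γ).IsDiag → (m γ⁻¹).IsDiag := by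
    intro γ h
    by_contra hcon
    obtain ⟨h0, h1⟩ := hND γ⁻¹ hcon
    have he : (m γ * m γ⁻¹) 0 0 = 1 := by
      rw [← hmmul, mul_inv_cancel]
      rfl
    rw [hmul2, h0, h (show (0:Fin 2) ≠ 1 by decide)] at he
    simp at he
  -- diag * antidiag is antidiagonal, etc.
  have hDA : ∀ γ δ : ↥G, (m γ).IsDiag → ¬ (m δ).IsDiag → ¬ (m (γ * δ)).IsDiag := by
    intro γ δ hγ hδ
    obtain ⟨d0, d1⟩ := hND δ hδ
    refine hAnd _ ?_ ?_ <;> rw [hmmul, hmul2]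
    · rw [d0, hγ (show (0:Fin 2) ≠ 1 by decide)]; ring
    · rw [d1, hγ (show (1:Fin 2) ≠ 0 by decide)]; ring
  have hAD : ∀ γ δ : ↥G, ¬ (m γ).IsDiag → (m δ).IsDiag → ¬ (m (γ * δ)).IsDiag := by
    intro γ δ hγ hδ
    obtain ⟨d0, d1⟩ := hND γ hγ
    refine hAnd _ ?_ ?_ <;> rw [hmmul, hmul2]
    · rw [d0, hδ (show (1:Fin 2) ≠ 0 by decide)]; ring
    · rw [d1, hδ (show (0:Fin 2) ≠ 1 by decide)]; ring
  have hAA : ∀ γ δ : ↥G, ¬ (m γ).IsDiag → ¬ (m δ).IsDiag → (m (γ * δ)).IsDiag := by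
    intro γ δ hγ hδ
    obtain ⟨g0, g1⟩ := hND γ hγ
    obtain ⟨d0, d1⟩ := hND δ hδ
    refine isDiag2_aux ?_ ?_ <;> rw [hmmul, hmul2]
    · rw [g0, d1]; ring
    · rw [g1, d0]; ring
  -- the "permanent" and its multiplicativity
  set q : ↥G → ZMod ℓ := fun γ => m γ 0 0 * m γ 1 1 + m γ 0 1 * m γ 1 0 with hq
  have hqmul : ∀ γ δ : ↥G, q (γ * δ) = q γ * q δ := by
    intro γ δ
    have e := hmul2 (m γ) (m δ)
    simp only [hq, hmmul, e]
    rcases hdich γ with h1 | h1 <;> rcases hdich δ with h2 | h2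
    · rw [h1 (show (0:Fin 2) ≠ 1 by decide), h1 (show (1:Fin 2) ≠ 0 by decide),
        h2 (show (0:Fin 2) ≠ 1 by decide), h2 (show (1:Fin 2) ≠ 0 by decide)]; ring
    · rw [h1 (show (0:Fin 2) ≠ 1 by decide), h1 (show (1:Fin 2) ≠ 0 by decide),
        h2.1, h2.2]; ring
    · rw [h1.1, h1.2, h2 (show (0:Fin 2) ≠ 1 by decide),
        h2 (show (1:Fin 2) ≠ 0 by decide)]; ring
    · rw [h1.1, h1.2, h2.1, h2.2]; ring
  have hqone : q 1 = 1 := by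
    rw [hq]; simp only [hmone]; simp [Matrix.one_apply]
  have hqne : ∀ γ : ↥G, q γ ≠ 0 := by
    intro γ
    have hd := (hdetu γ).ne_zero
    rw [Matrix.det_fin_two] at hd
    rcases hdich γ with h1 | h1
    · have e1 := h1 (show (0:Fin 2) ≠ 1 by decide)
      have e2 := h1 (show (1:Fin 2) ≠ 0 by decide)
      simp only [hq, e1, e2, mul_zero, zero_mul, add_zero, sub_zero] at hd ⊢
      exact hd
    · simp only [hq, h1.1, h1.2, zero_mul, mul_zero, zero_add, zero_sub, neg_ne_zero] at hd ⊢
      exact hd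
  -- eigenvalue criterion
  set P : ↥G → Prop := fun γ => ∃ a : ZMod ℓ, ((m γ).charpoly).IsRoot a with hP
  have hPdiag : ∀ γ : ↥G, (m γ).IsDiag → P γ := by
    intro γ h
    refine ⟨m γ 0 0, ?_⟩
    rw [Polynomial.IsRoot, cp_eval_aux, h (show (0:Fin 2) ≠ 1 by decide)]
    ring
  set c : ↥G → ℤ := fun γ => quadraticChar (ZMod ℓ) (q γ) with hc
  have hcmul : ∀ γ δ : ↥G, c (γ * δ) = c γ * c δ := by
    intro γ δ
    rw [hc]
    simp only
    rw [hqmul, _root_.map_mul]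
  have hcdich : ∀ γ : ↥G, c γ = 1 ∨ c γ = -1 := fun γ => quadraticChar_dichotomy (hqne γ)
  have hcinv : ∀ γ : ↥G, c γ⁻¹ * c γ = 1 := by
    intro γ
    rw [← hcmul, inv_mul_cancel, hc]
    simp only
    rw [hqone, _root_.map_one]
  have hPanti : ∀ γ : ↥G, ¬ (m γ).IsDiag → (P γ ↔ c γ = 1) := by
    intro γ h
    obtain ⟨h0, h1⟩ := hND γ h
    have hqγ : q γ = m γ 0 1 * m γ 1 0 := by
      rw [hq]; simp only; rw [h0, zero_mul, zero_add]
    rw [hc]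
    simp only
    rw [quadraticChar_one_iff_isSquare (hqne γ), hqγ]
    constructor
    · rintro ⟨a, ha⟩
      rw [Polynomial.IsRoot, cp_eval_aux, h0, h1, sub_zero, sub_eq_zero] at ha
      exact ⟨a, ha.symm⟩
    · rintro ⟨r, hr⟩
      refine ⟨r, ?_⟩
      rw [Polynomial.IsRoot, cp_eval_aux, h0, h1, sub_zero, hr]
      ring
  -- counting setup
  set D : Finset ↥G := univ.filter (fun γ => (m γ).IsDiag) with hD
  set A : Finset ↥G := univ.filter (fun γ => ¬ (m γ).IsDiag) with hA
  have hsplit : D.card + A.card = Fintype.card ↥G := by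
    rw [hD, hA, ← Finset.card_univ]
    exact Finset.card_filter_add_card_filter_not _
  obtain ⟨w, hwG, hw⟩ := hnot
  set W : ↥G := ⟨w, hwG⟩ with hW
  have hwA : ¬ (m W).IsDiag := hw
  have hDAcard : D.card = A.card := by
    apply Finset.card_bij' (fun γ _ => W * γ) (fun γ _ => W⁻¹ * γ)
    · intro γ hγ
      rw [hD, mem_filter] at hγ
      rw [hA, mem_filter]
      exact ⟨mem_univ _, hAD W γ hwA hγ.2⟩
    · intro γ hγ
      rw [hA, mem_filter] at hγ
      rw [hD, mem_filter]
      exact ⟨mem_univ _, hAA W⁻¹ γ (hinv W hwA) hγ.2⟩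
    · intro γ _
      exact inv_mul_cancel_left W γ
    · intro γ _
      exact mul_inv_cancel_left W γ
  have hDpos : 0 < D.card := by
    refine Finset.card_pos.mpr ⟨1, ?_⟩
    rw [hD, mem_filter]
    exact ⟨mem_univ _, by rw [hmone]; exact Matrix.isDiag_one⟩
  -- numerator
  have hnum : Nat.card {γ : ↥G // ∃ a : ZMod ℓ,
      (Matrix.charpoly (((γ : GL (Fin 2) (ZMod ℓ)) :
        Matrix (Fin 2) (Fin 2) (ZMod ℓ)))).IsRoot a} = (univ.filter P).card := by
    rw [Nat.card_eq_fintype_card]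
    exact (Fintype.card_congr (Equiv.refl _)).trans (Fintype.card_subtype _)
  have hden : Nat.card ↥G = D.card + A.card := by
    rw [Nat.card_eq_fintype_card, hsplit]
  rw [hnum, hden]
  have hAcast : ((A.card : ℚ)) = (D.card : ℚ) := by exact_mod_cast hDAcard.symm
  have hDne0 : ((D.card : ℚ)) ≠ 0 := by exact_mod_cast hDpos.ne'
  by_cases hall : ∀ γ : ↥G, ¬ (m γ).IsDiag → c γ = 1
  · -- proportion 1
    have hE : univ.filter P = univ := by
      rw [Finset.filter_eq_self]
      intro γ _
      by_cases hd : (m γ).IsDiag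
      · exact hPdiag γ hd
      · exact (hPanti γ hd).mpr (hall γ hd)
    have hval : (((univ.filter P).card : ℚ)) / ((D.card + A.card : ℕ) : ℚ) = 1 := by
      rw [hE]
      have e : ((#(univ : Finset ↥G) : ℕ) : ℚ) = ((D.card + A.card : ℕ) : ℚ) := by
        exact_mod_cast congrArg (Nat.cast : ℕ → ℚ) (hsplit.trans Finset.card_univ.symm).symm
      rw [e]
      have hpos : (0:ℚ) < ((D.card + A.card : ℕ) : ℚ) := by
        have : 0 < D.card + A.card := by omega
        exact_mod_cast this
      exact div_self (ne_of_gt hpos)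
    rw [hval]
    right; right; rfl
  · by_cases hnone : ∀ γ : ↥G, ¬ (m γ).IsDiag → c γ = -1
    · -- proportion 1/2
      have hE : univ.filter P = D := by
        rw [hD]
        apply Finset.filter_congr
        intro γ _
        constructor
        · intro hp
          by_contra hd
          have := (hPanti γ hd).mp hp
          rw [hnone γ hd] at this
          exact absurd this (by decide)
        · exact hPdiag γ
      have hval : (((univ.filter P).card : ℚ)) / ((D.card + A.card : ℕ) : ℚ) = 1 / 2 := by
        have hDQ : (0:ℚ) < (D.card : ℚ) := by exact_mod_cast hDpos
        rw [hE]
        push_cast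
        rw [hAcast]
        rw [div_eq_div_iff (by linarith) (by norm_num)]
        ring
      rw [hval]
      left; rfl
    · -- proportion 3/4
      push_neg at hall hnone
      obtain ⟨γ₁, hγ₁d, hγ₁⟩ := hall
      obtain ⟨γ₂, hγ₂d, hγ₂⟩ := hnone
      have hc₁ : c γ₁ = -1 := (hcdich γ₁).resolve_left hγ₁
      have hc₂ : c γ₂ = 1 := (hcdich γ₂).resolve_right hγ₂
      set d₀ : ↥G := γ₂⁻¹ * γ₁ with hd₀
      have hd₀D : (m d₀).IsDiag := hAA _ _ (hinv γ₂ hγ₂d) hγ₁d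
      have hc₂inv : c γ₂⁻¹ = 1 := by
        have := hcinv γ₂
        rw [hc₂, mul_one] at this
        exact this
      have hcd₀ : c d₀ = -1 := by
        rw [hd₀, hcmul, hc₂inv, hc₁]
        ring
      have hcd₀inv : c d₀⁻¹ = -1 := by
        have := hcinv d₀
        rw [hcd₀] at this
        omega
      set A1 : Finset ↥G := A.filter (fun γ => c γ = 1) with hA1
      set A2 : Finset ↥G := A.filter (fun γ => ¬ c γ = 1) with hA2
      have hA12 : A1.card + A2.card = A.card := by
        rw [hA1, hA2]
        exact Finset.card_filter_add_card_filter_not _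
      have hA1A2 : A1.card = A2.card := by
        apply Finset.card_bij' (fun γ _ => γ * d₀) (fun γ _ => γ * d₀⁻¹)
        · intro γ hγ
          rw [hA1, mem_filter, hA, mem_filter] at hγ
          rw [hA2, mem_filter, hA, mem_filter]
          refine ⟨⟨mem_univ _, hAD γ d₀ hγ.1.2 hd₀D⟩, ?_⟩
          rw [hcmul, hγ.2, hcd₀]
          decide
        · intro γ hγ
          rw [hA2, mem_filter, hA, mem_filter] at hγ
          rw [hA1, mem_filter, hA, mem_filter]
          refine ⟨⟨mem_univ _, hAD γ d₀⁻¹ hγ.1.2 (hinvD d₀ hd₀D)⟩, ?_⟩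
          have hcγ := (hcdich γ).resolve_left hγ.2
          rw [hcmul, hcγ, hcd₀inv]
          norm_num
        · intro γ _
          exact mul_inv_cancel_right γ d₀
        · intro γ _
          exact inv_mul_cancel_right γ d₀
      have hE : univ.filter P = D ∪ A1 := by
        ext γ
        rw [hD, hA1, hA]
        simp only [mem_filter, mem_union, mem_univ, true_and]
        constructor
        · intro hp
          by_cases hd : (m γ).IsDiag
          · exact Or.inl hd
          · exact Or.inr ⟨hd, (hPanti γ hd).mp hp⟩
        · rintro (hd | ⟨hd, hc1⟩)
          · exact hPdiag γ hd
          · exact (hPanti γ hd).mpr hc1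
      have hdisj : Disjoint D A1 := by
        rw [Finset.disjoint_left]
        intro γ hγ hγ'
        rw [hD, mem_filter] at hγ
        rw [hA1, mem_filter, hA, mem_filter] at hγ'
        exact hγ'.1.2 hγ.2
      have hEcard : (univ.filter P).card = D.card + A1.card := by
        rw [hE, Finset.card_union_of_disjoint hdisj]
      set n := A1.card with hn
      have hAcard : A.card = 2 * n := by omega
      have hDcard : D.card = 2 * n := by omega
      have hnpos : 0 < n := by
        rcases Nat.eq_zero_or_pos n with h | h
        · exfalso
          rw [hDcard, h] at hDpos
          simp at hDpos
        · exact h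
      have hval : (((univ.filter P).card : ℚ)) / ((D.card + A.card : ℕ) : ℚ) = 3 / 4 := by
        have h0 : (0:ℚ) < ((n : ℕ) : ℚ) := by exact_mod_cast hnpos
        rw [hEcard, hDcard, hAcard]
        push_cast
        rw [div_eq_div_iff (by linarith) (by norm_num)]
        ring
      rw [hval]
      right; left; rfl
end

section
/- Let ℓ be an odd prime and G a subgroup of the nonsplit Cartan subgroup of GL₂(𝔽_ℓ). Then the proportion of matrices in G with an eigenvalue in 𝔽_ℓ equals 1/|Ḡ|, where Ḡ is the image of G in PGL₂(𝔽_ℓ). -/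
open Polynomial in
lemma charpoly_fin_two' {R : Type*} [CommRing R] (M : Matrix (Fin 2) (Fin 2) R) :
    M.charpoly = X ^ 2 - C (M 0 0 + M 1 1) * X + C (M 0 0 * M 1 1 - M 0 1 * M 1 0) := by
  rw [Matrix.charpoly, Matrix.det_fin_two]
  simp [Matrix.charmatrix_apply]
  ring

theorem stmt_11 (ℓ : ℕ) [Fact (Nat.Prime ℓ)] (hodd : Odd ℓ)
    (ε : ZMod ℓ) (hε : ε ≠ 0) (hεns : ¬ IsSquare ε)
    (G : Subgroup (GL (Fin 2) (ZMod ℓ)))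
    (hns : ∀ γ ∈ G, ∃ a b : ZMod ℓ,
      ((γ : Matrix (Fin 2) (Fin 2) (ZMod ℓ))) = !![a, ε * b; b, a]) :
    (Nat.card {γ : G // ∃ a : ZMod ℓ,
        (Matrix.charpoly (((γ : GL (Fin 2) (ZMod ℓ)) :
          Matrix (Fin 2) (Fin 2) (ZMod ℓ)))).IsRoot a} : ℚ) / (Nat.card G : ℚ) =
      1 / (Nat.card (G.map (QuotientGroup.mk' (Subgroup.center (GL (Fin 2) (ZMod ℓ))))) : ℚ) := by
  have hℓ2 : (2 : ZMod ℓ) ≠ 0 := by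
    intro h
    have hd : ℓ ∣ 2 := (ZMod.natCast_eq_zero_iff 2 ℓ).mp (by exact_mod_cast h)
    have h2 := (Nat.prime_dvd_prime_iff_eq Fact.out Nat.prime_two).mp hd
    rw [h2, Nat.odd_iff] at hodd
    omega
  -- key characterization
  have key : ∀ γ : G, (∃ a : ZMod ℓ,
      (Matrix.charpoly (((γ : GL (Fin 2) (ZMod ℓ)) :
        Matrix (Fin 2) (Fin 2) (ZMod ℓ)))).IsRoot a) ↔
      (γ : GL (Fin 2) (ZMod ℓ)) ∈ Subgroup.center (GL (Fin 2) (ZMod ℓ)) := by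
    intro γ
    obtain ⟨a, b, hM⟩ := hns γ γ.2
    have hchar : (Matrix.charpoly (((γ : GL (Fin 2) (ZMod ℓ)) :
        Matrix (Fin 2) (Fin 2) (ZMod ℓ)))) =
        Polynomial.X ^ 2 - Polynomial.C (a + a) * Polynomial.X
          + Polynomial.C (a * a - (ε * b) * b) := by
      rw [charpoly_fin_two', hM]
      norm_num
    constructor
    · rintro ⟨r, hr⟩
      have hb : b = 0 := by
        by_contra hb
        apply hεns
        rw [hchar] at hr
        have h1 : r ^ 2 - (a + a) * r + (a * a - ε * b * b) = 0 := by
          simpa using hr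
        refine ⟨(r - a) * b⁻¹, ?_⟩
        field_simp
        linear_combination -h1
      have hM1 : ((γ : GL (Fin 2) (ZMod ℓ)) : Matrix (Fin 2) (Fin 2) (ZMod ℓ))
          = a • (1 : Matrix (Fin 2) (Fin 2) (ZMod ℓ)) := by
        rw [hM, hb]
        ext i j
        fin_cases i <;> fin_cases j <;> simp [Matrix.one_fin_two]
      rw [Subgroup.mem_center_iff]
      intro g
      refine Units.ext ?_
      show (g : Matrix (Fin 2) (Fin 2) (ZMod ℓ)) * _ = _ * (g : Matrix (Fin 2) (Fin 2) (ZMod ℓ))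
      rw [hM1, Matrix.mul_smul, Matrix.smul_mul, mul_one, one_mul]
    · intro hc
      have hb : b = 0 := by
        rw [Subgroup.mem_center_iff] at hc
        have hd : (!![1, 0; 0, -1] : Matrix (Fin 2) (Fin 2) (ZMod ℓ)) *
            !![1, 0; 0, -1] = 1 := by
          ext i j
          fin_cases i <;> fin_cases j <;>
            simp [Matrix.mul_apply, Fin.sum_univ_two, Matrix.one_apply]
        set D : GL (Fin 2) (ZMod ℓ) := ⟨!![1, 0; 0, -1], !![1, 0; 0, -1], hd, hd⟩
        have hcD := hc D
        have hmat : (!![1, 0; 0, -1] : Matrix (Fin 2) (Fin 2) (ZMod ℓ)) *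
            !![a, ε * b; b, a] = !![a, ε * b; b, a] * !![1, 0; 0, -1] := by
          have := congrArg Units.val hcD
          simpa [D, hM] using this
        have h10 := (Matrix.ext_iff.mpr hmat) 1 0
        simp [Matrix.mul_apply, Fin.sum_univ_two] at h10
        have h2b : (2 : ZMod ℓ) * b = 0 := by linear_combination -h10
        rcases mul_eq_zero.mp h2b with h | h
        · exact absurd h hℓ2
        · exact h
      refine ⟨a, ?_⟩
      rw [hchar, hb]
      simp [Polynomial.IsRoot]
      ring
  -- group theory
  set f : G →* (GL (Fin 2) (ZMod ℓ)) ⧸ Subgroup.center (GL (Fin 2) (ZMod ℓ)) :=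
    (QuotientGroup.mk' (Subgroup.center (GL (Fin 2) (ZMod ℓ)))).comp G.subtype with hf
  have hker : ∀ γ : G, γ ∈ f.ker ↔
      (γ : GL (Fin 2) (ZMod ℓ)) ∈ Subgroup.center (GL (Fin 2) (ZMod ℓ)) := by
    intro γ
    rw [MonoidHom.mem_ker]
    simp [f, QuotientGroup.eq_one_iff]
  have hcard1 : Nat.card {γ : G // ∃ a : ZMod ℓ,
      (Matrix.charpoly (((γ : GL (Fin 2) (ZMod ℓ)) :
        Matrix (Fin 2) (Fin 2) (ZMod ℓ)))).IsRoot a} = Nat.card f.ker := by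
    apply Nat.card_congr
    exact Equiv.subtypeEquivRight (fun γ => (key γ).trans (hker γ).symm)
  have hrange' : Nat.card f.range =
      Nat.card (G.map (QuotientGroup.mk' (Subgroup.center (GL (Fin 2) (ZMod ℓ))))) := by
    congr 1
    rw [hf, MonoidHom.range_comp, Subgroup.range_subtype]
  have hGcard : Nat.card G = Nat.card f.range * Nat.card f.ker := by
    rw [Subgroup.card_eq_card_quotient_mul_card_subgroup f.ker]
    congr 1
    exact Nat.card_congr (QuotientGroup.quotientKerEquivRange f).toEquiv
  have hk0 : 0 < Nat.card f.ker := Nat.card_pos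
  have hr0 : 0 < Nat.card f.range := Nat.card_pos
  have hk : ((Nat.card f.ker : ℕ) : ℚ) ≠ 0 := Nat.cast_ne_zero.mpr hk0.ne'
  have hr : ((Nat.card f.range : ℕ) : ℚ) ≠ 0 := Nat.cast_ne_zero.mpr hr0.ne'
  rw [hcard1, ← hrange', hGcard]
  rw [Nat.cast_mul]
  rw [div_eq_div_iff (by positivity) (by positivity)]
  ring
end

section
/- Let ℓ be an odd prime and G ⊆ GL₂(𝔽_ℓ) a subgroup. Then the proportion of matrices in G having 1 as an eigenvalue is at most 2/|G ∩ Z| − 1/|G|, where Z is the subgroup of scalar matrices. In particular, if |G ∩ Z| ≥ 3 then this proportion is at most 2/3. -/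
open Matrix Polynomial

theorem eval_cp (F : Type*) [Field F] (M : Matrix (Fin 2) (Fin 2) F) (a : F) :
    eval a M.charpoly = det (a • (1 : Matrix (Fin 2) (Fin 2) F) - M) := by
  rw [Matrix.charpoly, ← coe_evalRingHom, RingHom.map_det]
  congr 1
  ext i j
  by_cases h : i = j <;>
    simp [h, charmatrix_apply, Matrix.diagonal_apply, Matrix.one_apply, Matrix.smul_apply]

theorem root_smul (F : Type*) [Field F] (M : Matrix (Fin 2) (Fin 2) F) (c : Fˣ)
    (h : (((c : F) • M).charpoly).IsRoot 1) : (M.charpoly).IsRoot ((c : F))⁻¹ := by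
  have h1 : eval 1 ((c : F) • M).charpoly = 0 := h
  rw [eval_cp] at h1
  have key : (1 : F) • (1 : Matrix (Fin 2) (Fin 2) F) - (c : F) • M
      = (c : F) • ((((c : F))⁻¹) • 1 - M) := by
    rw [smul_sub, smul_smul]
    simp [mul_inv_cancel₀ c.ne_zero]
  rw [key, det_smul] at h1
  have hc : ((c : F) ^ (Fintype.card (Fin 2))) ≠ 0 := pow_ne_zero _ c.ne_zero
  have := (mul_eq_zero.mp h1).resolve_left hc
  rw [IsRoot, eval_cp]
  exact this

theorem center_scalar (F : Type*) [Field F] (A : GL (Fin 2) F)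
    (hA : A ∈ Subgroup.center (GL (Fin 2) F)) :
    ∃ c : Fˣ, (A : Matrix (Fin 2) (Fin 2) F) = (c : F) • 1 := by
  obtain ⟨r, hr⟩ := Matrix.mem_range_scalar_of_commute_transvectionStruct
    (M := (A : Matrix (Fin 2) (Fin 2) F)) (fun t => by
      have := Subgroup.mem_center_iff.mp hA
        (Matrix.SpecialLinearGroup.toGL ⟨t.toMatrix, t.det⟩)
      exact congrArg Units.val this)
  have hdet : IsUnit (det (A : Matrix (Fin 2) (Fin 2) F)) := A.isUnit.map (detMonoidHom)
  rw [← hr] at hdet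
  have hr2 : det ((scalar (Fin 2)) r) = r ^ 2 := by
    rw [show (scalar (Fin 2)) r = r • (1 : Matrix (Fin 2) (Fin 2) F) by simp [smul_eq_diagonal_mul],
      det_smul]
    simp
  rw [hr2] at hdet
  obtain ⟨c, hc⟩ := (isUnit_pow_iff (by norm_num)).mp hdet
  exact ⟨c, by rw [← hr, hc]; simp [smul_eq_diagonal_mul]⟩

theorem main_count (F : Type*) [Field F] [Finite F] (G : Subgroup (GL (Fin 2) F)) :
    Nat.card {γ : G // (Matrix.charpoly (((γ : GL (Fin 2) F) :
        Matrix (Fin 2) (Fin 2) F))).IsRoot 1}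
      ≤ 2 * Nat.card (G ⧸ ((G ⊓ Subgroup.center (GL (Fin 2) F)).subgroupOf G)) - 1 := by
  classical
  set K := G ⊓ Subgroup.center (GL (Fin 2) F) with hK
  set H := K.subgroupOf G with hH
  have : Fintype (GL (Fin 2) F) := Fintype.ofFinite _
  have : Fintype G := Fintype.ofFinite _
  have : Fintype (G ⧸ H) := Fintype.ofFinite _
  set P : G → Prop := fun g => (Matrix.charpoly (((g : GL (Fin 2) F) :
      Matrix (Fin 2) (Fin 2) F))).IsRoot 1 with hP
  have hSP : Nat.card {γ : G // P γ} = (Finset.univ.filter P).card := by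
    rw [Nat.card_eq_fintype_card, Fintype.card_subtype]
  rw [hSP]
  -- fiber decomposition
  have hfib := Finset.card_eq_sum_card_fiberwise
    (f := (QuotientGroup.mk : G → G ⧸ H)) (s := Finset.univ.filter P) (t := Finset.univ)
    (fun x _ => Finset.mem_univ _)
  rw [hfib]
  -- fiberwise bounds
  have key : ∀ (q : G ⧸ H) (γ : G), QuotientGroup.mk γ = q →
      ∀ g ∈ (Finset.univ.filter P).filter (fun g => QuotientGroup.mk g = q),
        ∃ c : Fˣ, (((g : GL (Fin 2) F)) : Matrix (Fin 2) (Fin 2) F)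
            = (c : F) • (((γ : GL (Fin 2) F)) : Matrix (Fin 2) (Fin 2) F) ∧
          (c : F) = (((((γ⁻¹ * g : G) : GL (Fin 2) F)) : Matrix (Fin 2) (Fin 2) F) 0 0) := by
    intro q γ hγ g hg
    rw [Finset.mem_filter, Finset.mem_filter] at hg
    obtain ⟨⟨-, hPg⟩, hq⟩ := hg
    have hz : γ⁻¹ * g ∈ H := by
      rw [← QuotientGroup.eq, hγ, hq]
    have hzc : ((γ⁻¹ * g : G) : GL (Fin 2) F) ∈ Subgroup.center (GL (Fin 2) F) := by
      have := hz
      rw [hH, Subgroup.mem_subgroupOf] at this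
      exact this.2
    obtain ⟨c, hc⟩ := center_scalar F _ hzc
    refine ⟨c, ?_, by rw [hc]; simp [Matrix.smul_apply, Matrix.one_apply]⟩
    have hgz : (g : GL (Fin 2) F) = (γ : GL (Fin 2) F) * ((γ⁻¹ * g : G) : GL (Fin 2) F) := by
      push_cast
      group
    calc (((g : GL (Fin 2) F)) : Matrix (Fin 2) (Fin 2) F)
        = (((γ : GL (Fin 2) F)) : Matrix (Fin 2) (Fin 2) F) *
          ((((γ⁻¹ * g : G) : GL (Fin 2) F)) : Matrix (Fin 2) (Fin 2) F) := by
          rw [hgz]; rfl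
      _ = _ := by rw [hc, Matrix.mul_smul, Matrix.mul_one]
  -- per-fiber cardinality bound
  have hcp_ne : ∀ M : Matrix (Fin 2) (Fin 2) F, M.charpoly ≠ 0 :=
    fun M => (Matrix.charpoly_monic M).ne_zero
  have bound : ∀ q : G ⧸ H,
      ((Finset.univ.filter P).filter (fun g => QuotientGroup.mk g = q)).card
        ≤ if q = (QuotientGroup.mk (1 : G) : G ⧸ H) then 1 else 2 := by
    intro q
    by_cases h1 : q = (QuotientGroup.mk (1 : G) : G ⧸ H)
    · subst h1
      rw [if_pos rfl]
      refine Finset.card_le_one.mpr (fun g hg g' hg' => ?_)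
      have hone : ∀ g ∈ (Finset.univ.filter P).filter
          (fun g => QuotientGroup.mk g = (QuotientGroup.mk (1 : G) : G ⧸ H)), g = 1 := by
        intro g hg
        obtain ⟨c, hc1, -⟩ := key ((QuotientGroup.mk (1 : G) : G ⧸ H)) 1 rfl g hg
        rw [Finset.mem_filter, Finset.mem_filter] at hg
        obtain ⟨⟨-, hPg⟩, -⟩ := hg
        have hcoe1 : (((1 : G) : GL (Fin 2) F) : Matrix (Fin 2) (Fin 2) F) = 1 := by
          simp
        rw [hcoe1] at hc1
        have heval : eval 1 ((((g : GL (Fin 2) F)) :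
            Matrix (Fin 2) (Fin 2) F)).charpoly = (1 - (c : F)) ^ 2 := by
          rw [eval_cp, hc1, show (1 : F) • (1 : Matrix (Fin 2) (Fin 2) F) - (c : F) • 1
            = ((1 : F) - (c : F)) • 1 by rw [sub_smul], det_smul]
          simp
        have : (1 - (c : F)) ^ 2 = 0 := by rw [← heval]; exact hPg
        have hc : (c : F) = 1 := by
          have := pow_eq_zero_iff (n := 2) (by norm_num) |>.mp this
          linear_combination -this
        have : (((g : GL (Fin 2) F)) : Matrix (Fin 2) (Fin 2) F) = 1 := by
          rw [hc1, hc, one_smul]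
        have : (g : GL (Fin 2) F) = 1 := Units.ext this
        exact OneMemClass.coe_eq_one.mp this
      exact (hone g hg).trans (hone g' hg').symm
    · rw [if_neg h1]
      have hout : QuotientGroup.mk (Quotient.out q) = q := QuotientGroup.out_eq' q
      set γ : G := Quotient.out q with hγdef
      have hroots2 : ((((γ : GL (Fin 2) F)) :
          Matrix (Fin 2) (Fin 2) F).charpoly).roots.toFinset.card ≤ 2 := by
        refine (Multiset.toFinset_card_le _).trans ?_
        refine (Polynomial.card_roots' _).trans ?_
        rw [Matrix.charpoly_natDegree_eq_dim, Fintype.card_fin]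
      refine le_trans (Finset.card_le_card_of_injOn
        (fun g => (((((γ⁻¹ * g : G) : GL (Fin 2) F)) :
          Matrix (Fin 2) (Fin 2) F) 0 0)⁻¹)
        ?_ ?_) hroots2
      · intro g hg
        obtain ⟨c, hc1, hc2⟩ := key q γ hout g hg
        rw [Finset.mem_coe, Finset.mem_filter, Finset.mem_filter] at hg
        obtain ⟨⟨-, hPg⟩, -⟩ := hg
        have hroot : ((((γ : GL (Fin 2) F)) :
            Matrix (Fin 2) (Fin 2) F).charpoly).IsRoot ((c : F))⁻¹ := by
          refine root_smul F _ c ?_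
          rw [← hc1]; exact hPg
        dsimp only
        rw [Finset.mem_coe, Multiset.mem_toFinset, Polynomial.mem_roots (hcp_ne _)]
        rw [← hc2]
        exact hroot
      · intro g hg g' hg' heq
        obtain ⟨c, hc1, hc2⟩ := key q γ hout g hg
        obtain ⟨c', hc1', hc2'⟩ := key q γ hout g' hg'
        simp only at heq
        rw [← hc2, ← hc2'] at heq
        have hcc : (c : F) = (c' : F) := inv_injective heq
        have : (((g : GL (Fin 2) F)) : Matrix (Fin 2) (Fin 2) F)
            = (((g' : GL (Fin 2) F)) : Matrix (Fin 2) (Fin 2) F) := by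
          rw [hc1, hc1', hcc]
        exact Subtype.ext (Units.ext this)
  -- sum the bounds
  have hsum : ∑ q : G ⧸ H, ((Finset.univ.filter P).filter
      (fun g => QuotientGroup.mk g = q)).card
        ≤ ∑ q : G ⧸ H, (if q = (QuotientGroup.mk (1 : G) : G ⧸ H) then 1 else 2) :=
    Finset.sum_le_sum (fun q _ => bound q)
  have hn1 : 1 ≤ Fintype.card (G ⧸ H) := Fintype.card_pos
  have hsum2 : ∑ q : G ⧸ H, (if q = (QuotientGroup.mk (1 : G) : G ⧸ H) then 1 else 2)
      = 1 + 2 * (Fintype.card (G ⧸ H) - 1) := by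
    rw [← Finset.add_sum_erase _ _ (Finset.mem_univ ((QuotientGroup.mk (1 : G) : G ⧸ H) : G ⧸ H)), if_pos rfl]
    congr 1
    rw [Finset.sum_congr rfl (fun q hq => if_neg (Finset.ne_of_mem_erase hq)),
      Finset.sum_const, Finset.card_erase_of_mem (Finset.mem_univ _), Finset.card_univ,
      smul_eq_mul, mul_comm]
  rw [Nat.card_eq_fintype_card]
  omega


theorem stmt_12 (ℓ : ℕ) [Fact (Nat.Prime ℓ)] (hodd : Odd ℓ)
    (G : Subgroup (GL (Fin 2) (ZMod ℓ))) :
    (Nat.card {γ : G // (Matrix.charpoly (((γ : GL (Fin 2) (ZMod ℓ)) :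
        Matrix (Fin 2) (Fin 2) (ZMod ℓ)))).IsRoot 1} : ℚ) / (Nat.card G : ℚ) ≤
      2 / (Nat.card (G ⊓ Subgroup.center (GL (Fin 2) (ZMod ℓ)) : Subgroup _) : ℚ)
        - 1 / (Nat.card G : ℚ) ∧
    (3 ≤ Nat.card (G ⊓ Subgroup.center (GL (Fin 2) (ZMod ℓ)) : Subgroup _) →
      (Nat.card {γ : G // (Matrix.charpoly (((γ : GL (Fin 2) (ZMod ℓ)) :
        Matrix (Fin 2) (Fin 2) (ZMod ℓ)))).IsRoot 1} : ℚ) / (Nat.card G : ℚ) ≤ 2 / 3) := by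
  set F := ZMod ℓ
  set K := G ⊓ Subgroup.center (GL (Fin 2) F) with hK
  set H := K.subgroupOf G with hH
  set S := Nat.card {γ : G // (Matrix.charpoly (((γ : GL (Fin 2) F) :
      Matrix (Fin 2) (Fin 2) F))).IsRoot 1} with hS
  have hcount : S ≤ 2 * Nat.card (G ⧸ H) - 1 := main_count F G
  set n := Nat.card (G ⧸ H) with hn
  set m := Nat.card K with hm
  have hHK : Nat.card H = m := Nat.card_congr (Subgroup.subgroupOfEquivOfLe
    (inf_le_left : K ≤ G)).toEquiv
  have hG : Nat.card G = n * m := by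
    rw [Subgroup.card_eq_card_quotient_mul_card_subgroup H, hHK]
  have hn1 : 1 ≤ n := Nat.card_pos
  have hm1 : 1 ≤ m := Nat.card_pos
  have hnq : (0 : ℚ) < n := by exact_mod_cast hn1
  have hmq : (0 : ℚ) < m := by exact_mod_cast hm1
  have hSq : (S : ℚ) ≤ 2 * n - 1 := by
    have : S + 1 ≤ 2 * n := by omega
    have := (Nat.cast_le (α := ℚ)).mpr this
    push_cast at this
    linarith
  have part1 : (S : ℚ) / (Nat.card G : ℚ) ≤ 2 / m - 1 / (Nat.card G : ℚ) := by
    rw [hG]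
    push_cast
    have heq : 2 / (m : ℚ) - 1 / ((n : ℚ) * m) = (2 * n - 1) / ((n : ℚ) * m) := by
      field_simp
    rw [heq]
    gcongr
  refine ⟨part1, fun h3 => ?_⟩
  have h3q : (3 : ℚ) ≤ m := by exact_mod_cast h3
  have h23 : 2 / (m : ℚ) ≤ 2 / 3 := by
    gcongr
  have hGpos : (0 : ℚ) < (Nat.card G : ℚ) := by
    rw [hG]; positivity
  have : 1 / (Nat.card G : ℚ) ≥ 0 := by positivity
  linarith
end

section
/- Let ℓ be an odd prime and G ⊆ GL₂(𝔽_ℓ) a subgroup with G ∩ Z = {±I}, where Z is the group of scalar matrices. Then the number of γ ∈ G with 1 as an eigenvalue is at most 2·|Ḡ₂| + |Ḡ \ Ḡ₂|, where Ḡ is the image of G in PGL₂(𝔽_ℓ) and Ḡ₂ is the set of elements of Ḡ of order 2. -/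
open Matrix Polynomial

private lemma aux_charpoly_root {ℓ : ℕ} [Fact (Nat.Prime ℓ)]
    (M : Matrix (Fin 2) (Fin 2) (ZMod ℓ)) (h : M.charpoly.IsRoot 1) :
    (1 - M 0 0) * (1 - M 1 1) - M 0 1 * M 1 0 = 0 := by
  simp only [Matrix.charpoly, Matrix.det_fin_two, Polynomial.IsRoot,
    Matrix.charmatrix_apply_eq, Matrix.charmatrix_apply_ne _ _ _ (by decide : (0:Fin 2) ≠ 1),
    Matrix.charmatrix_apply_ne _ _ _ (by decide : (1:Fin 2) ≠ 0)] at h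
  simpa using h

private lemma aux_two_ne_zero {ℓ : ℕ} [Fact (Nat.Prime ℓ)] (hodd : Odd ℓ) :
    (2 : ZMod ℓ) ≠ 0 := by
  have hne : ℓ ≠ 2 := by rintro rfl; exact (by decide : ¬ Odd 2) hodd
  intro h
  have : ((2 : ℕ) : ZMod ℓ) = 0 := by exact_mod_cast h
  rw [ZMod.natCast_eq_zero_iff] at this
  exact hne ((Nat.prime_dvd_prime_iff_eq (Fact.out) Nat.prime_two).mp this)

private lemma aux_sq_trace {ℓ : ℕ} [Fact (Nat.Prime ℓ)] (hodd : Odd ℓ)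
    (M : Matrix (Fin 2) (Fin 2) (ZMod ℓ)) (h1 : M.charpoly.IsRoot 1)
    (h2 : (-M).charpoly.IsRoot 1) :
    M * M = 1 ∧ M 0 0 + M 1 1 = 0 := by
  have e1 := aux_charpoly_root M h1
  have e2 := aux_charpoly_root (-M) h2
  simp only [Matrix.neg_apply] at e2
  have htwo := aux_two_ne_zero hodd
  have hsum : M 0 0 + M 1 1 = 0 := by
    have h3 : (2 : ZMod ℓ) * (M 0 0 + M 1 1) = 0 := by linear_combination e2 - e1
    rcases mul_eq_zero.mp h3 with h | h
    · exact absurd h htwo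
    · exact h
  have hq : M 0 0 * M 0 0 + M 0 1 * M 1 0 = 1 := by
    linear_combination (M 0 0 - 1) * hsum - e1
  refine ⟨?_, hsum⟩
  have hd : M 1 1 = - M 0 0 := by linear_combination hsum
  ext i j
  fin_cases i <;> fin_cases j <;>
    simp [Matrix.mul_apply, Fin.sum_univ_two, Matrix.one_apply, hd] <;>
    first
      | linear_combination hq
      | ring

private lemma aux_card_le_two_mul {α β : Type*} [Finite α] [Finite β] (f : α → β)
    (h : ∀ a₁ a₂ a₃ : α, f a₁ = f a₂ → f a₁ = f a₃ → a₁ = a₂ ∨ a₁ = a₃ ∨ a₂ = a₃) :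
    Nat.card α ≤ 2 * Nat.card β := by
  classical
  cases nonempty_fintype α; cases nonempty_fintype β
  rw [Nat.card_eq_fintype_card, Nat.card_eq_fintype_card, ← Finset.card_univ]
  calc (Finset.univ : Finset α).card ≤ 2 * (Finset.univ.image f).card := by
        apply Finset.card_le_mul_card_image
        intro b _
        by_contra hc
        push_neg at hc
        obtain ⟨x, y, z, hx, hy, hz, hxy, hxz, hyz⟩ := Finset.two_lt_card_iff.mp hc
        simp only [Finset.mem_filter] at hx hy hz
        rcases h x y z (hx.2.trans hy.2.symm) (hx.2.trans hz.2.symm) with h|h|h <;> tauto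
    _ ≤ 2 * Fintype.card β := by
        gcongr
        exact (Finset.card_le_univ _).trans_eq Finset.card_univ

theorem stmt_13 (ℓ : ℕ) [Fact (Nat.Prime ℓ)] (hodd : Odd ℓ)
    (G : Subgroup (GL (Fin 2) (ZMod ℓ)))
    (hZ : ((G ⊓ Subgroup.center (GL (Fin 2) (ZMod ℓ)) : Subgroup _) :
      Set (GL (Fin 2) (ZMod ℓ))) = {1, -1}) :
    (Nat.card {γ : G // (Matrix.charpoly (((γ : GL (Fin 2) (ZMod ℓ)) :
        Matrix (Fin 2) (Fin 2) (ZMod ℓ)))).IsRoot 1}) ≤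
      2 * Nat.card {x : G.map (QuotientGroup.mk' (Subgroup.center (GL (Fin 2) (ZMod ℓ)))) //
          orderOf x = 2} +
        Nat.card {x : G.map (QuotientGroup.mk' (Subgroup.center (GL (Fin 2) (ZMod ℓ)))) //
          orderOf x ≠ 2} := by
  classical
  set mk := QuotientGroup.mk' (Subgroup.center (GL (Fin 2) (ZMod ℓ))) with hmk
  set S := {γ : G // (Matrix.charpoly (((γ : GL (Fin 2) (ZMod ℓ)) :
      Matrix (Fin 2) (Fin 2) (ZMod ℓ)))).IsRoot 1} with hS
  set Gbar := G.map mk with hGbar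
  let f : S → Gbar := fun γ => ⟨mk γ.1.1, ⟨γ.1.1, γ.1.2, rfl⟩⟩
  -- Fact A: equal images means equal or negatives
  have hA : ∀ γ₁ γ₂ : S, f γ₁ = f γ₂ →
      γ₁ = γ₂ ∨ (γ₂.1.1 : GL (Fin 2) (ZMod ℓ)) = -(γ₁.1.1 : GL (Fin 2) (ZMod ℓ)) := by
    intro γ₁ γ₂ h
    have h' : mk γ₁.1.1 = mk γ₂.1.1 := congrArg Subtype.val h
    rw [QuotientGroup.mk'_eq_mk'] at h'
    obtain ⟨z, hz, hze⟩ := h'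
    have hzdef : z = (γ₁.1.1 : GL (Fin 2) (ZMod ℓ))⁻¹ * γ₂.1.1 := by
      rw [← hze]; group
    have hzG : z ∈ G := by
      rw [hzdef]; exact mul_mem (inv_mem γ₁.1.2) γ₂.1.2
    have hmem : z ∈ ((G ⊓ Subgroup.center (GL (Fin 2) (ZMod ℓ)) : Subgroup _) :
        Set (GL (Fin 2) (ZMod ℓ))) := ⟨hzG, hz⟩
    rw [hZ] at hmem
    rcases hmem with h1 | hm1
    · left
      have : (γ₁.1.1 : GL (Fin 2) (ZMod ℓ)) = γ₂.1.1 := by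
        rw [← hze, h1, mul_one]
      exact Subtype.ext (Subtype.ext this)
    · right
      rw [← hze, Set.mem_singleton_iff.mp hm1, mul_neg, mul_one]
  -- Fact B: if γ₂ = -γ₁ (both with eigenvalue 1), then f γ₁ has order 2
  have hB : ∀ γ₁ γ₂ : S,
      (γ₂.1.1 : GL (Fin 2) (ZMod ℓ)) = -(γ₁.1.1 : GL (Fin 2) (ZMod ℓ)) →
      orderOf (f γ₁) = 2 := by
    intro γ₁ γ₂ hneg
    set u : GL (Fin 2) (ZMod ℓ) := γ₁.1.1 with hu
    have h1 : (Matrix.charpoly (u : Matrix (Fin 2) (Fin 2) (ZMod ℓ))).IsRoot 1 := γ₁.2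
    have h2 : (Matrix.charpoly (-(u : Matrix (Fin 2) (Fin 2) (ZMod ℓ)))).IsRoot 1 := by
      have := γ₂.2
      rwa [hneg, Units.val_neg] at this
    obtain ⟨hsq, htr⟩ := aux_sq_trace hodd (u : Matrix (Fin 2) (Fin 2) (ZMod ℓ)) h1 h2
    have hu2 : u ^ 2 = 1 := by
      apply Units.ext
      rw [Units.val_pow_eq_pow_val, Units.val_one, sq]
      exact hsq
    apply orderOf_eq_prime
    · show f γ₁ ^ 2 = 1
      apply Subtype.ext
      show (mk u) ^ 2 = 1
      rw [← map_pow, hu2]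
      exact _root_.map_one mk
    · intro hone
      have : mk u = 1 := congrArg Subtype.val hone
      have hucen : u ∈ Subgroup.center (GL (Fin 2) (ZMod ℓ)) := by
        rwa [← QuotientGroup.ker_mk' (Subgroup.center (GL (Fin 2) (ZMod ℓ))),
          MonoidHom.mem_ker]
      have hmem : u ∈ ((G ⊓ Subgroup.center (GL (Fin 2) (ZMod ℓ)) : Subgroup _) :
          Set (GL (Fin 2) (ZMod ℓ))) := ⟨γ₁.1.2, hucen⟩
      rw [hZ] at hmem
      have htwo := aux_two_ne_zero hodd
      rcases hmem with h1' | hm1'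
      · have h' : (u : Matrix (Fin 2) (Fin 2) (ZMod ℓ)) = 1 := by rw [h1', Units.val_one]
        rw [h'] at htr
        simp only [Matrix.one_apply_eq] at htr
        exact htwo (by linear_combination htr)
      · have h' : (u : Matrix (Fin 2) (Fin 2) (ZMod ℓ)) = -1 := by
          rw [Set.mem_singleton_iff.mp hm1', Units.val_neg, Units.val_one]
        rw [h'] at htr
        simp only [Matrix.neg_apply, Matrix.one_apply_eq] at htr
        exact htwo (by linear_combination -htr)
  -- split S by order of image
  let P : S → Prop := fun γ => orderOf (f γ) = 2
  have hsplit : Nat.card S = Nat.card {γ : S // P γ} + Nat.card {γ : S // ¬ P γ} := by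
    rw [← Nat.card_sum]
    exact Nat.card_congr (Equiv.sumCompl P).symm
  rw [hsplit]
  refine Nat.add_le_add ?_ ?_
  · -- order-2 part: at most 2-to-1 onto order-2 elements of Gbar
    apply aux_card_le_two_mul (fun γ : {γ : S // P γ} => (⟨f γ.1, γ.2⟩ :
      {x : Gbar // orderOf x = 2}))
    intro a b c hab hac
    have hab' : f a.1 = f b.1 := congrArg Subtype.val hab
    have hac' : f a.1 = f c.1 := congrArg Subtype.val hac
    rcases hA _ _ hab' with h | h
    · left; exact Subtype.ext h
    · rcases hA _ _ hac' with h' | h'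
      · right; left; exact Subtype.ext h'
      · right; right
        exact Subtype.ext (Subtype.ext (Subtype.ext (h.trans h'.symm)))
  · -- non-order-2 part: injective into non-order-2 elements of Gbar
    apply Nat.card_le_card_of_injective
      (fun γ : {γ : S // ¬ P γ} => (⟨f γ.1, γ.2⟩ : {x : Gbar // orderOf x ≠ 2}))
    intro a b hab
    have hab' : f a.1 = f b.1 := congrArg Subtype.val hab
    rcases hA _ _ hab' with h | h
    · exact Subtype.ext h
    · exact absurd (hB _ _ h) a.2
end

section
/- Let ℓ be an odd prime and G a subgroup of the group of invertible diagonal matrices (split Cartan) in GL₂(𝔽_ℓ). If the proportion F₁(G) of matrices in G with 1 as an eigenvalue is not 1, then F₁(G) ≤ 1/2 + 1/|G|. -/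
theorem stmt_16 (ℓ : ℕ) [Fact (Nat.Prime ℓ)] (hodd : Odd ℓ)
    (G : Subgroup (GL (Fin 2) (ZMod ℓ)))
    (hCs : ∀ γ ∈ G, Matrix.IsDiag ((γ : Matrix (Fin 2) (Fin 2) (ZMod ℓ))))
    (hne : (Nat.card {γ : G // (Matrix.charpoly (((γ : GL (Fin 2) (ZMod ℓ)) :
        Matrix (Fin 2) (Fin 2) (ZMod ℓ)))).IsRoot 1} : ℚ) / (Nat.card G : ℚ) ≠ 1) :
    (Nat.card {γ : G // (Matrix.charpoly (((γ : GL (Fin 2) (ZMod ℓ)) :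
        Matrix (Fin 2) (Fin 2) (ZMod ℓ)))).IsRoot 1} : ℚ) / (Nat.card G : ℚ) ≤
      1 / 2 + 1 / (Nat.card G : ℚ) := by
  haveI : NeZero ℓ := ⟨(Fact.out (p := ℓ.Prime)).ne_zero⟩
  set M : G → Matrix (Fin 2) (Fin 2) (ZMod ℓ) :=
    fun γ => ((γ : GL (Fin 2) (ZMod ℓ)) : Matrix (Fin 2) (Fin 2) (ZMod ℓ)) with hM
  have hdiag : ∀ γ : G, Matrix.IsDiag (M γ) := fun γ => hCs γ γ.2
  -- characterization of the root condition
  have hchar : ∀ γ : G, (Matrix.charpoly (M γ)).IsRoot 1 ↔ M γ 0 0 = 1 ∨ M γ 1 1 = 1 := by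
    intro γ
    have htri : (M γ).BlockTriangular id := fun i j h => hdiag γ (Ne.symm (ne_of_lt h))
    rw [Matrix.charpoly_of_upperTriangular _ htri]
    have he : Polynomial.eval 1 (∏ i : Fin 2, (Polynomial.X - Polynomial.C (M γ i i)))
        = (1 - M γ 0 0) * (1 - M γ 1 1) := by simp [Fin.prod_univ_two]
    rw [Polynomial.IsRoot, he, mul_eq_zero, sub_eq_zero, sub_eq_zero]
    exact or_congr eq_comm eq_comm
  -- multiplicativity of diagonal entries
  have hMmul : ∀ γ δ : G, M (γ * δ) = M γ * M δ := by
    intro γ δ; simp [hM]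
  have hentry : ∀ γ δ : G, ∀ i : Fin 2, M (γ * δ) i i = M γ i i * M δ i i := by
    intro γ δ i
    rw [hMmul, Matrix.mul_apply, Fin.sum_univ_two]
    fin_cases i <;>
      simp [hdiag γ (show (0 : Fin 2) ≠ 1 by decide),
        hdiag γ (show (1 : Fin 2) ≠ 0 by decide)]
  have hMone : M 1 = 1 := by simp [hM]
  have hinv : ∀ γ : G, ∀ i : Fin 2, M γ i i * M γ⁻¹ i i = 1 := by
    intro γ i
    have : M (γ * γ⁻¹) i i = 1 := by rw [mul_inv_cancel, hMone, Matrix.one_apply_eq]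
    rwa [hentry] at this
  -- the two subgroups
  let A : Subgroup G :=
    { carrier := {γ | M γ 0 0 = 1}
      one_mem' := by simp [hMone]
      mul_mem' := fun {x y} hx hy => by
        simp only [Set.mem_setOf_eq] at *
        rw [hentry, hx, hy, one_mul]
      inv_mem' := fun {x} hx => by
        simp only [Set.mem_setOf_eq] at *
        have := hinv x 0
        rwa [hx, one_mul] at this }
  let B : Subgroup G :=
    { carrier := {γ | M γ 1 1 = 1}
      one_mem' := by simp [hMone]
      mul_mem' := fun {x y} hx hy => by
        simp only [Set.mem_setOf_eq] at *
        rw [hentry, hx, hy, one_mul]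
      inv_mem' := fun {x} hx => by
        simp only [Set.mem_setOf_eq] at *
        have := hinv x 1
        rwa [hx, one_mul] at this }
  have hmemA : ∀ γ : G, γ ∈ A ↔ M γ 0 0 = 1 := fun _ => Iff.rfl
  have hmemB : ∀ γ : G, γ ∈ B ↔ M γ 1 1 = 1 := fun _ => Iff.rfl
  -- triviality of the intersection
  have htriv : ∀ z : G, z ∈ A → z ∈ B → z = 1 := by
    intro z hzA hzB
    have hz : M z = 1 := by
      ext i j
      fin_cases i <;> fin_cases j
      · simpa using (hmemA z).1 hzA
      · simp [hdiag z (show (0 : Fin 2) ≠ 1 by decide), Matrix.one_apply]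
      · simp [hdiag z (show (1 : Fin 2) ≠ 0 by decide), Matrix.one_apply]
      · simpa using (hmemB z).1 hzB
    have : (z : GL (Fin 2) (ZMod ℓ)) = 1 := Units.ext hz
    exact Subtype.ext this
  -- finiteness
  haveI : Finite G := inferInstance
  haveI hFA : Finite A := Subtype.finite
  haveI hFB : Finite B := Subtype.finite
  haveI : Nonempty A := ⟨⟨1, A.one_mem⟩⟩
  haveI : Nonempty B := ⟨⟨1, B.one_mem⟩⟩
  set n := Nat.card G with hn
  set a := Nat.card A with ha
  set b := Nat.card B with hb
  have hnpos : 0 < n := Nat.card_pos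
  have hapos : 0 < a := Nat.card_pos
  have hbpos : 0 < b := Nat.card_pos
  -- a * b ≤ n
  have hab : a * b ≤ n := by
    have hinj : Function.Injective (fun p : A × B => ((p.1 : G) * (p.2 : G))) := by
      rintro ⟨x1, y1⟩ ⟨x2, y2⟩ h
      simp only at h
      have h' : (x1 : G) * (y1 : G) = (x2 : G) * (y2 : G) := h
      have hx : ((x2 : G))⁻¹ * (x1 : G) = (y2 : G) * ((y1 : G))⁻¹ := by
        rw [eq_comm, mul_inv_eq_iff_eq_mul, mul_assoc, h', ← mul_assoc,
          inv_mul_cancel, one_mul]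
      have hmem1 : ((x2 : G)⁻¹ * (x1 : G)) ∈ A := A.mul_mem (A.inv_mem x2.2) x1.2
      have hmem2 : ((x2 : G)⁻¹ * (x1 : G)) ∈ B := hx ▸ B.mul_mem y2.2 (B.inv_mem y1.2)
      have h1 : ((x2 : G)⁻¹ * (x1 : G)) = 1 := htriv _ hmem1 hmem2
      have hxx : (x1 : G) = x2 := (inv_mul_eq_one.mp h1).symm
      have h2 : (y2 : G) * ((y1 : G))⁻¹ = 1 := hx ▸ h1
      have hyy : (y1 : G) = y2 := (mul_inv_eq_one.mp h2).symm
      exact Prod.ext (Subtype.ext hxx) (Subtype.ext hyy)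
    calc a * b = Nat.card (A × B) := (Nat.card_prod _ _).symm
      _ ≤ n := Nat.card_le_card_of_injective _ hinj
  -- there is an element without eigenvalue 1
  have hex : ∃ γ : G, ¬ (Matrix.charpoly (M γ)).IsRoot 1 := by
    by_contra h
    push_neg at h
    have : Nat.card {γ : G // (Matrix.charpoly (M γ)).IsRoot 1} = n :=
      Nat.card_congr (Equiv.subtypeUnivEquiv h)
    apply hne
    rw [this]
    exact div_self (by exact_mod_cast hnpos.ne')
  obtain ⟨γ₀, hγ₀⟩ := hex
  have hγ₀A : γ₀ ∉ A := fun h => hγ₀ ((hchar γ₀).2 (Or.inl ((hmemA γ₀).1 h)))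
  have hγ₀B : γ₀ ∉ B := fun h => hγ₀ ((hchar γ₀).2 (Or.inr ((hmemB γ₀).1 h)))
  -- half bounds
  have half : ∀ H : Subgroup G, γ₀ ∉ H → 2 * Nat.card H ≤ n := by
    intro H hH
    have hdvd : Nat.card H ∣ n := Subgroup.card_subgroup_dvd_card H
    obtain ⟨k, hk⟩ := hdvd
    have hk2 : 2 ≤ k := by
      rcases Nat.lt_or_ge k 2 with hlt | hge
      · interval_cases k
        · omega
        · exfalso
          apply hH
          have : H = ⊤ := Subgroup.eq_top_of_card_eq H (by omega)
          rw [this]; trivial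
      · exact hge
    calc 2 * Nat.card H ≤ Nat.card H * k := by
          rw [mul_comm]; exact Nat.mul_le_mul_left _ hk2
      _ = n := hk.symm
  have h2a : 2 * a ≤ n := half A hγ₀A
  have h2b : 2 * b ≤ n := half B hγ₀B
  -- counting the union
  have hSset : {γ : G | (Matrix.charpoly (M γ)).IsRoot 1} = (A : Set G) ∪ (B : Set G) := by
    ext γ
    simp only [Set.mem_setOf_eq, Set.mem_union, SetLike.mem_coe, hchar, hmemA, hmemB]
  have hinter : (A : Set G) ∩ (B : Set G) = {1} := by
    ext z
    simp only [Set.mem_inter_iff, SetLike.mem_coe, Set.mem_singleton_iff]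
    constructor
    · rintro ⟨h1, h2⟩; exact htriv z h1 h2
    · rintro rfl; exact ⟨A.one_mem, B.one_mem⟩
  set s := Nat.card {γ : G // (Matrix.charpoly (M γ)).IsRoot 1} with hs
  have hcount : s + 1 = a + b := by
    have h1 : s = ({γ : G | (Matrix.charpoly (M γ)).IsRoot 1} : Set G).ncard :=
      Nat.card_coe_set_eq _
    have h2 : a = ((A : Set G)).ncard := Nat.card_coe_set_eq _
    have h3 : b = ((B : Set G)).ncard := Nat.card_coe_set_eq _
    rw [h1, h2, h3, hSset]
    have := Set.ncard_union_add_ncard_inter (A : Set G) (B : Set G)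
      (Set.toFinite _) (Set.toFinite _)
    rw [hinter, Set.ncard_singleton] at this
    exact this
  -- arithmetic
  have key : 2 * a + 2 * b ≤ n + 4 := by
    rcases Nat.lt_or_ge a 2 with h | h
    · omega
    rcases Nat.lt_or_ge b 2 with h' | h'
    · omega
    · obtain ⟨a', ha'⟩ : ∃ a', a = a' + 2 := ⟨a - 2, by omega⟩
      obtain ⟨b', hb'⟩ : ∃ b', b = b' + 2 := ⟨b - 2, by omega⟩
      have hab' : a' * b' + 2 * a' + 2 * b' + 4 ≤ n := by
        calc a' * b' + 2 * a' + 2 * b' + 4 = (a' + 2) * (b' + 2) := by ring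
          _ = a * b := by rw [ha', hb']
          _ ≤ n := hab
      omega
  have hs2 : 2 * s ≤ n + 2 := by omega
  -- conclude
  have hn0 : (0 : ℚ) < n := by exact_mod_cast hnpos
  rw [div_le_iff₀ hn0]
  have heq : (1 / 2 + 1 / (n : ℚ)) * n = n / 2 + 1 := by
    field_simp
  rw [heq]
  have : (2 * s : ℚ) ≤ (n : ℚ) + 2 := by exact_mod_cast hs2
  linarith
end

section
/- Let ℓ be an odd prime and G a subgroup of GL₂(𝔽_ℓ) contained in the normalizer of the split Cartan subgroup. If the proportion F₁(G) of matrices in G with 1 as an eigenvalue is not 1, then F₁(G) ≤ 1/2 + 1/|G|. -/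
open Matrix Polynomial Finset

set_option linter.unusedSectionVars false
set_option linter.unusedVariables false
set_option maxHeartbeats 1000000

namespace Stmt17Aux

variable {ℓ : ℕ} [Fact (Nat.Prime ℓ)]

lemma root_iff (M : Matrix (Fin 2) (Fin 2) (ZMod ℓ)) :
    M.charpoly.IsRoot 1 ↔ (1 - M 0 0) * (1 - M 1 1) - M 0 1 * M 1 0 = 0 := by
  simp [Matrix.charpoly, Matrix.det_fin_two, Polynomial.IsRoot, charmatrix_apply]

lemma mul_entry (M N : Matrix (Fin 2) (Fin 2) (ZMod ℓ)) (i j : Fin 2) :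
    (M * N) i j = M i 0 * N 0 j + M i 1 * N 1 j := by
  simp [Matrix.mul_apply, Fin.sum_univ_two]

lemma matext {M N : Matrix (Fin 2) (Fin 2) (ZMod ℓ)} (h00 : M 0 0 = N 0 0)
    (h01 : M 0 1 = N 0 1) (h10 : M 1 0 = N 1 0) (h11 : M 1 1 = N 1 1) : M = N := by
  ext i j; fin_cases i <;> fin_cases j <;> assumption

lemma mul_inv_mat (γ : GL (Fin 2) (ZMod ℓ)) :
    (γ : Matrix (Fin 2) (Fin 2) (ZMod ℓ)) *
      ((γ⁻¹ : GL (Fin 2) (ZMod ℓ)) : Matrix (Fin 2) (Fin 2) (ZMod ℓ)) = 1 := by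
  rw [← Units.val_mul, mul_inv_cancel]; rfl

lemma det_ne (γ : GL (Fin 2) (ZMod ℓ)) :
    (γ : Matrix (Fin 2) (Fin 2) (ZMod ℓ)) 0 0 * (γ : Matrix (Fin 2) (Fin 2) (ZMod ℓ)) 1 1 -
      (γ : Matrix (Fin 2) (Fin 2) (ZMod ℓ)) 0 1 * (γ : Matrix (Fin 2) (Fin 2) (ZMod ℓ)) 1 0 ≠ 0 := by
  have h := congrArg Matrix.det (mul_inv_mat γ)
  rw [Matrix.det_mul, Matrix.det_one] at h
  have := left_ne_zero_of_mul_eq_one h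
  rwa [Matrix.det_fin_two] at this

lemma inv_anti (γ : GL (Fin 2) (ZMod ℓ))
    (h00 : (γ : Matrix (Fin 2) (Fin 2) (ZMod ℓ)) 0 0 = 0)
    (h11 : (γ : Matrix (Fin 2) (Fin 2) (ZMod ℓ)) 1 1 = 0) :
    ((γ⁻¹ : GL (Fin 2) (ZMod ℓ)) : Matrix (Fin 2) (Fin 2) (ZMod ℓ)) 0 0 = 0 ∧
    ((γ⁻¹ : GL (Fin 2) (ZMod ℓ)) : Matrix (Fin 2) (Fin 2) (ZMod ℓ)) 1 1 = 0 ∧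
    (γ : Matrix (Fin 2) (Fin 2) (ZMod ℓ)) 0 1 *
      ((γ⁻¹ : GL (Fin 2) (ZMod ℓ)) : Matrix (Fin 2) (Fin 2) (ZMod ℓ)) 1 0 = 1 ∧
    (γ : Matrix (Fin 2) (Fin 2) (ZMod ℓ)) 1 0 *
      ((γ⁻¹ : GL (Fin 2) (ZMod ℓ)) : Matrix (Fin 2) (Fin 2) (ZMod ℓ)) 0 1 = 1 := by
  have h := mul_inv_mat γ
  have e00 := congrFun (congrFun h 0) 0
  have e01 := congrFun (congrFun h 0) 1
  have e10 := congrFun (congrFun h 1) 0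
  have e11 := congrFun (congrFun h 1) 1
  rw [mul_entry] at e00 e01 e10 e11
  simp only [Matrix.one_apply_eq, h00, h11, zero_mul, zero_add, add_zero] at e00 e01 e10 e11
  rw [Matrix.one_apply_ne (by decide)] at e01
  rw [Matrix.one_apply_ne (by decide)] at e10
  have hb : (γ : Matrix (Fin 2) (Fin 2) (ZMod ℓ)) 0 1 ≠ 0 := left_ne_zero_of_mul_eq_one e00
  have hc : (γ : Matrix (Fin 2) (Fin 2) (ZMod ℓ)) 1 0 ≠ 0 := left_ne_zero_of_mul_eq_one e11
  exact ⟨by rcases mul_eq_zero.mp e10 with h | h; exact absurd h hc; exact h,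
    by rcases mul_eq_zero.mp e01 with h | h; exact absurd h hb; exact h, e00, e11⟩

lemma inv_diag (γ : GL (Fin 2) (ZMod ℓ))
    (h01 : (γ : Matrix (Fin 2) (Fin 2) (ZMod ℓ)) 0 1 = 0)
    (h10 : (γ : Matrix (Fin 2) (Fin 2) (ZMod ℓ)) 1 0 = 0) :
    ((γ⁻¹ : GL (Fin 2) (ZMod ℓ)) : Matrix (Fin 2) (Fin 2) (ZMod ℓ)) 0 1 = 0 ∧
    ((γ⁻¹ : GL (Fin 2) (ZMod ℓ)) : Matrix (Fin 2) (Fin 2) (ZMod ℓ)) 1 0 = 0 ∧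
    (γ : Matrix (Fin 2) (Fin 2) (ZMod ℓ)) 0 0 *
      ((γ⁻¹ : GL (Fin 2) (ZMod ℓ)) : Matrix (Fin 2) (Fin 2) (ZMod ℓ)) 0 0 = 1 ∧
    (γ : Matrix (Fin 2) (Fin 2) (ZMod ℓ)) 1 1 *
      ((γ⁻¹ : GL (Fin 2) (ZMod ℓ)) : Matrix (Fin 2) (Fin 2) (ZMod ℓ)) 1 1 = 1 := by
  have h := mul_inv_mat γ
  have e00 := congrFun (congrFun h 0) 0
  have e01 := congrFun (congrFun h 0) 1
  have e10 := congrFun (congrFun h 1) 0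
  have e11 := congrFun (congrFun h 1) 1
  rw [mul_entry] at e00 e01 e10 e11
  simp only [Matrix.one_apply_eq, h01, h10, zero_mul, mul_zero, zero_add, add_zero] at e00 e01 e10 e11
  rw [Matrix.one_apply_ne (by decide)] at e01
  rw [Matrix.one_apply_ne (by decide)] at e10
  have ha : (γ : Matrix (Fin 2) (Fin 2) (ZMod ℓ)) 0 0 ≠ 0 := left_ne_zero_of_mul_eq_one e00
  have hd : (γ : Matrix (Fin 2) (Fin 2) (ZMod ℓ)) 1 1 ≠ 0 := left_ne_zero_of_mul_eq_one e11
  exact ⟨by rcases mul_eq_zero.mp e01 with h | h; exact absurd h ha; exact h,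
    by rcases mul_eq_zero.mp e10 with h | h; exact absurd h hd; exact h, e00, e11⟩

variable (G : Subgroup (GL (Fin 2) (ZMod ℓ)))

def mm (γ : G) : Matrix (Fin 2) (Fin 2) (ZMod ℓ) :=
  ((γ : GL (Fin 2) (ZMod ℓ)) : Matrix (Fin 2) (Fin 2) (ZMod ℓ))

lemma mm_mul (x y : G) : mm G (x*y) = mm G x * mm G y := rfl

lemma mm_one : mm G (1 : G) = 1 := rfl

lemma mm_inj {x y : G} (h : mm G x = mm G y) : x = y := Subtype.ext (Units.ext h)

lemma mm_inv (x : G) :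
    mm G x⁻¹ = (((x : GL (Fin 2) (ZMod ℓ))⁻¹ : GL (Fin 2) (ZMod ℓ)) :
      Matrix (Fin 2) (Fin 2) (ZMod ℓ)) := rfl

end Stmt17Aux

open Stmt17Aux

theorem stmt_17 (ℓ : ℕ) [Fact (Nat.Prime ℓ)] (hodd : Odd ℓ)
    (G : Subgroup (GL (Fin 2) (ZMod ℓ)))
    (hnorm : ∀ γ ∈ G, Matrix.IsDiag ((γ : Matrix (Fin 2) (Fin 2) (ZMod ℓ))) ∨
      (((γ : Matrix (Fin 2) (Fin 2) (ZMod ℓ))) 0 0 = 0 ∧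
        ((γ : Matrix (Fin 2) (Fin 2) (ZMod ℓ))) 1 1 = 0))
    (hne : (Nat.card {γ : G // (Matrix.charpoly (((γ : GL (Fin 2) (ZMod ℓ)) :
        Matrix (Fin 2) (Fin 2) (ZMod ℓ)))).IsRoot 1} : ℚ) / (Nat.card G : ℚ) ≠ 1) :
    (Nat.card {γ : G // (Matrix.charpoly (((γ : GL (Fin 2) (ZMod ℓ)) :
        Matrix (Fin 2) (Fin 2) (ZMod ℓ)))).IsRoot 1} : ℚ) / (Nat.card G : ℚ) ≤
      1 / 2 + 1 / (Nat.card G : ℚ) := by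
  classical
  haveI : Fintype G := Fintype.ofFinite G
  set m : G → Matrix (Fin 2) (Fin 2) (ZMod ℓ) := mm G with hm
  -- basic dichotomy
  have hdi : ∀ γ : G, (m γ 0 1 = 0 ∧ m γ 1 0 = 0) ∨ (m γ 0 0 = 0 ∧ m γ 1 1 = 0) := by
    intro γ
    refine (hnorm γ γ.2).imp (fun h => ⟨h (by decide), h (by decide)⟩) id
  have hdet : ∀ γ : G, m γ 0 0 * m γ 1 1 - m γ 0 1 * m γ 1 0 ≠ 0 := fun γ => det_ne _
  have hone : (1 : ZMod ℓ) ≠ 0 := one_ne_zero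
  -- finsets
  set SS : Finset G := univ.filter
    (fun γ : G => (Matrix.charpoly (((γ : GL (Fin 2) (ZMod ℓ)) :
      Matrix (Fin 2) (Fin 2) (ZMod ℓ)))).IsRoot 1) with hSS
  set SA : Finset G := univ.filter (fun γ => m γ 0 0 = 1 ∧ m γ 0 1 = 0 ∧ m γ 1 0 = 0) with hSA
  set SB : Finset G := univ.filter (fun γ => m γ 1 1 = 1 ∧ m γ 0 1 = 0 ∧ m γ 1 0 = 0) with hSB
  set SC : Finset G := univ.filter (fun γ => m γ 0 0 = 0 ∧ m γ 1 1 = 0 ∧ m γ 0 1 * m γ 1 0 = 1)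
    with hSC
  set SH : Finset G := univ.filter (fun γ => m γ 0 1 = 0 ∧ m γ 1 0 = 0) with hSH
  set SW : Finset G := univ.filter (fun γ => m γ 0 0 = 0 ∧ m γ 1 1 = 0) with hSW
  have memSS : ∀ γ : G, γ ∈ SS ↔ (Matrix.charpoly (m γ)).IsRoot 1 := by
    intro γ; rw [hSS]; simp [mem_filter]; rfl
  have memSA : ∀ γ : G, γ ∈ SA ↔ (m γ 0 0 = 1 ∧ m γ 0 1 = 0 ∧ m γ 1 0 = 0) := by
    intro γ; rw [hSA]; simp [mem_filter]
  have memSB : ∀ γ : G, γ ∈ SB ↔ (m γ 1 1 = 1 ∧ m γ 0 1 = 0 ∧ m γ 1 0 = 0) := by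
    intro γ; rw [hSB]; simp [mem_filter]
  have memSC : ∀ γ : G, γ ∈ SC ↔ (m γ 0 0 = 0 ∧ m γ 1 1 = 0 ∧ m γ 0 1 * m γ 1 0 = 1) := by
    intro γ; rw [hSC]; simp [mem_filter]
  have memSH : ∀ γ : G, γ ∈ SH ↔ (m γ 0 1 = 0 ∧ m γ 1 0 = 0) := by
    intro γ; rw [hSH]; simp [mem_filter]
  have memSW : ∀ γ : G, γ ∈ SW ↔ (m γ 0 0 = 0 ∧ m γ 1 1 = 0) := by
    intro γ; rw [hSW]; simp [mem_filter]
  -- decomposition of SS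
  have hSSeq : SS = (SA ∪ SB) ∪ SC := by
    ext γ
    rw [memSS, mem_union, mem_union, memSA, memSB, memSC, root_iff]
    rcases hdi γ with ⟨h01, h10⟩ | ⟨h00, h11⟩
    · rw [h01, h10]
      constructor
      · intro hr
        have : (1 - m γ 0 0) * (1 - m γ 1 1) = 0 := by linear_combination hr
        rcases mul_eq_zero.mp this with h | h
        · exact Or.inl (Or.inl ⟨by linear_combination -h, rfl, rfl⟩)
        · exact Or.inl (Or.inr ⟨by linear_combination -h, rfl, rfl⟩)
      · rintro ((⟨h1, -, -⟩ | ⟨h1, -, -⟩) | ⟨-, -, hc⟩)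
        · rw [h1]; ring
        · rw [h1]; ring
        · simp at hc
    · rw [h00, h11]
      constructor
      · intro hr
        refine Or.inr ⟨rfl, rfl, ?_⟩
        linear_combination -hr
      · rintro ((⟨h1, -, -⟩ | ⟨h1, -, -⟩) | ⟨-, -, hc⟩)
        · exact absurd h1.symm hone
        · exact absurd h1.symm hone
        · linear_combination -hc
  -- SA ∩ SB = {1}
  have hABinter : SA ∩ SB = {1} := by
    ext γ
    rw [mem_inter, memSA, memSB, mem_singleton]
    constructor
    · rintro ⟨⟨ha, h01, h10⟩, ⟨hb, -, -⟩⟩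
      apply mm_inj G
      rw [mm_one]
      exact matext (by rw [← hm, ha]; simp [Matrix.one_apply])
        (by rw [← hm, h01]; simp [Matrix.one_apply])
        (by rw [← hm, h10]; simp [Matrix.one_apply])
        (by rw [← hm, hb]; simp [Matrix.one_apply])
    · rintro rfl
      have : m (1 : G) = 1 := mm_one G
      rw [this]
      simp [Matrix.one_apply]
  have h1A : (1 : G) ∈ SA := by
    rw [memSA]
    have : m (1 : G) = 1 := mm_one G
    rw [this]; simp [Matrix.one_apply]
  have h1B : (1 : G) ∈ SB := by
    rw [memSB]
    have : m (1 : G) = 1 := mm_one G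
    rw [this]; simp [Matrix.one_apply]
  -- disjointness
  have hABC : Disjoint (SA ∪ SB) SC := by
    rw [disjoint_left]
    intro γ hγ hγC
    rw [memSC] at hγC
    rcases mem_union.mp hγ with h | h
    · rw [memSA] at h; exact hone (h.1 ▸ hγC.1)
    · rw [memSB] at h; exact hone (h.1 ▸ hγC.2.1)
  have hcardS : SS.card + 1 = SA.card + SB.card + SC.card := by
    rw [hSSeq, card_union_of_disjoint hABC]
    have := Finset.card_union_add_card_inter SA SB
    rw [hABinter, card_singleton] at this
    omega
  -- SH SW partition
  have hHW : SH.card + SW.card = Fintype.card G := by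
    have hdisj : Disjoint SH SW := by
      rw [disjoint_left]
      intro γ hγ hγ'
      rw [memSH] at hγ; rw [memSW] at hγ'
      exact hdet γ (by rw [hγ.1, hγ.2, hγ'.1, hγ'.2]; ring)
    have hcov : SH ∪ SW = univ := by
      ext γ
      simp only [mem_union, mem_univ, iff_true, memSH, memSW]
      exact hdi γ
    rw [← Finset.card_univ, ← hcov, card_union_of_disjoint hdisj]

  -- normalize cardinalities
  set n := Fintype.card G with hn'
  have hn : 0 < n := Fintype.card_pos
  have hcard : (Nat.card {γ : G // (Matrix.charpoly (((γ : GL (Fin 2) (ZMod ℓ)) :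
        Matrix (Fin 2) (Fin 2) (ZMod ℓ)))).IsRoot 1}) = SS.card := by
    rw [Nat.card_eq_fintype_card, Fintype.card_subtype, hSS]
  have hNat : (Nat.card ↥G) = n := Nat.card_eq_fintype_card
  rw [hcard, hNat] at hne ⊢
  have hSne : SS.card ≠ n := by
    intro h
    apply hne
    rw [h, div_self (Nat.cast_ne_zero.mpr hn.ne')]
  obtain ⟨g, hgS⟩ : ∃ g : G, g ∉ SS := by
    by_contra hall
    push_neg at hall
    exact hSne (by rw [hn', ← Finset.card_univ]; congr 1; exact Finset.eq_univ_iff_forall.mpr hall)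
  rw [hSSeq] at hgS
  simp only [mem_union] at hgS
  push_neg at hgS
  obtain ⟨⟨hgA, hgB⟩, hgC⟩ := hgS
  have hmul : ∀ x y : G, m (x*y) = m x * m y := fun x y => mm_mul G x y
  have ent : ∀ (x y : G) (i j : Fin 2), m (x*y) i j = m x i 0 * m y 0 j + m x i 1 * m y 1 j := by
    intro x y i j; rw [hmul, mul_entry]
  have hg00 : m g 0 0 ≠ 1 := by
    rcases hdi g with ⟨h01, h10⟩ | ⟨h00, h11⟩
    · exact fun h1 => hgA ((memSA g).mpr ⟨h1, h01, h10⟩)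
    · rw [h00]; exact fun h => hone h.symm
  have hg11 : m g 1 1 ≠ 1 := by
    rcases hdi g with ⟨h01, h10⟩ | ⟨h00, h11⟩
    · exact fun h1 => hgB ((memSB g).mpr ⟨h1, h01, h10⟩)
    · rw [h11]; exact fun h => hone h.symm
  have h2a : SA.card + SA.card ≤ n := by
    have hTcard : (SA.image (fun x => g * x)).card = SA.card :=
      card_image_of_injective _ (mul_right_injective g)
    have hdisjT : Disjoint SA (SA.image (fun x => g * x)) := by
      rw [disjoint_right]
      intro γ hγT hγA
      obtain ⟨x, hx, rfl⟩ := mem_image.mp hγT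
      rw [memSA] at hx hγA
      apply hg00
      have e := ent g x 0 0
      rw [hx.1, hx.2.2, mul_one, mul_zero, add_zero] at e
      rw [← e]; exact hγA.1
    calc SA.card + SA.card = (SA ∪ SA.image (fun x => g * x)).card := by
          rw [card_union_of_disjoint hdisjT, hTcard]
      _ ≤ n := by rw [hn', ← Finset.card_univ]; exact card_le_univ _
  have h2b : SB.card + SB.card ≤ n := by
    have hTcard : (SB.image (fun x => g * x)).card = SB.card :=
      card_image_of_injective _ (mul_right_injective g)
    have hdisjT : Disjoint SB (SB.image (fun x => g * x)) := by
      rw [disjoint_right]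
      intro γ hγT hγB
      obtain ⟨x, hx, rfl⟩ := mem_image.mp hγT
      rw [memSB] at hx hγB
      apply hg11
      have e := ent g x 1 1
      rw [hx.1, hx.2.1, mul_one, mul_zero, zero_add] at e
      rw [← e]; exact hγB.1
    calc SB.card + SB.card = (SB ∪ SB.image (fun x => g * x)).card := by
          rw [card_union_of_disjoint hdisjT, hTcard]
      _ ≤ n := by rw [hn', ← Finset.card_univ]; exact card_le_univ _
  have hABle : SA.card * SB.card ≤ SH.card := by
    have hmaps : ∀ p ∈ SA ×ˢ SB, (fun p : G × G => p.1 * p.2) p ∈ SH := by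
      rintro ⟨x, y⟩ hp
      rw [mem_product] at hp
      obtain ⟨hx, hy⟩ := hp
      rw [memSA] at hx; rw [memSB] at hy
      rw [memSH]
      constructor
      · rw [ent, hy.2.1, hx.2.1, mul_zero, zero_mul, add_zero]
      · rw [ent, hx.2.2, hy.2.2, zero_mul, mul_zero, add_zero]
    have hinj : Set.InjOn (fun p : G × G => p.1 * p.2) ↑(SA ×ˢ SB) := by
      rintro ⟨x, y⟩ hp ⟨x', y'⟩ hq h
      simp only [mem_coe, mem_product] at hp hq
      obtain ⟨hx, hy⟩ := hp; obtain ⟨hx', hy'⟩ := hq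
      rw [memSA] at hx hx'; rw [memSB] at hy hy'
      have h' : x * y = x' * y' := h
      have hyy : y = y' := by
        apply mm_inj G
        have e : m (x * y) 0 0 = m (x' * y') 0 0 := by rw [h']
        rw [ent, ent, hx.1, hx'.1, hx.2.1, hx'.2.1, one_mul, one_mul, zero_mul, zero_mul,
          add_zero, add_zero] at e
        exact matext e (hy.2.1.trans hy'.2.1.symm) (hy.2.2.trans hy'.2.2.symm)
          (hy.1.trans hy'.1.symm)
      subst hyy
      have hxx : x = x' := mul_right_cancel h'
      exact congrArg (fun z => (z, y)) hxx
    have := Finset.card_le_card_of_injOn _ hmaps hinj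
    rwa [card_product] at this
  have hCW : SC ⊆ SW := by
    intro γ hγ
    rw [memSC] at hγ
    exact (memSW γ).mpr ⟨hγ.1, hγ.2.1⟩
  have hkW : SC.card ≤ SW.card := card_le_card hCW
  have key : 2 * SS.card + 2 ≤ n + 4 := by
    rcases Finset.eq_empty_or_nonempty SW with hW | hW
    · -- no antidiagonal elements
      have hC0 : SC.card = 0 := by
        rw [Finset.card_eq_zero]
        exact Finset.subset_empty.mp (hW ▸ hCW)
      have hWC0 : SW.card = 0 := by rw [hW, card_empty]
      have hHn : SH.card = n := by omega
      rcases Nat.lt_or_ge SA.card 2 with ha | ha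
      · omega
      rcases Nat.lt_or_ge SB.card 2 with hb | hb
      · omega
      have h4 : 2 * SA.card + 2 * SB.card ≤ SA.card * SB.card + 4 := by nlinarith
      have h5 : SA.card * SB.card + 4 ≤ n + 4 := by omega
      omega
    · obtain ⟨γ₀, hγ₀⟩ := hW
      have hγ₀W := (memSW γ₀).mp hγ₀
      have hi : m γ₀⁻¹ 0 0 = 0 ∧ m γ₀⁻¹ 1 1 = 0 ∧ m γ₀ 0 1 * m γ₀⁻¹ 1 0 = 1 ∧
          m γ₀ 1 0 * m γ₀⁻¹ 0 1 = 1 :=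
        inv_anti (γ₀ : GL (Fin 2) (ZMod ℓ)) hγ₀W.1 hγ₀W.2
      -- conjugation by γ₀ swaps SA and SB
      have hconjinj : Set.InjOn (fun x : G => γ₀ * x * γ₀⁻¹) ↑SA ∧
          Set.InjOn (fun x : G => γ₀ * x * γ₀⁻¹) ↑SB := by
        constructor <;>
        · intro x _ y _ h
          have h' : γ₀ * x * γ₀⁻¹ = γ₀ * y * γ₀⁻¹ := h
          exact mul_left_cancel (mul_right_cancel h')
      have hab : SA.card = SB.card := by
        apply le_antisymm
        · apply Finset.card_le_card_of_injOn _ _ hconjinj.1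
          intro x hx
          simp only [mem_coe] at hx ⊢
          rw [memSA] at hx
          rw [memSB]
          have u10 : m (γ₀ * x) 1 0 = m γ₀ 1 0 := by
            rw [ent, hx.1, hx.2.2, hγ₀W.2]; ring
          have u00 : m (γ₀ * x) 0 0 = 0 := by
            rw [ent, hx.1, hx.2.2, hγ₀W.1]; ring
          have u11 : m (γ₀ * x) 1 1 = 0 := by
            rw [ent, hx.2.1, hγ₀W.2]; ring
          refine ⟨?_, ?_, ?_⟩
          · rw [ent, u10, u11]; linear_combination hi.2.2.2
          · rw [ent, u00, hi.2.1]; ring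
          · rw [ent, u11, hi.1]; ring
        · apply Finset.card_le_card_of_injOn _ _ hconjinj.2
          intro x hx
          simp only [mem_coe] at hx ⊢
          rw [memSB] at hx
          rw [memSA]
          have u01 : m (γ₀ * x) 0 1 = m γ₀ 0 1 := by
            rw [ent, hx.1, hx.2.1, hγ₀W.1]; ring
          have u00 : m (γ₀ * x) 0 0 = 0 := by
            rw [ent, hx.2.2, hγ₀W.1]; ring
          have u11 : m (γ₀ * x) 1 1 = 0 := by
            rw [ent, hx.1, hx.2.1, hγ₀W.2]; ring
          refine ⟨?_, ?_, ?_⟩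
          · rw [ent, u00, u01]; linear_combination hi.2.2.1
          · rw [ent, u00, hi.2.1]; ring
          · rw [ent, u11, hi.1]; ring
      have hACle : SA.card * SC.card ≤ SW.card := by
        have hmaps : ∀ p ∈ SA ×ˢ SC, (fun p : G × G => p.1 * p.2) p ∈ SW := by
          rintro ⟨x, c⟩ hp
          rw [mem_product] at hp
          obtain ⟨hx, hc⟩ := hp
          rw [memSA] at hx; rw [memSC] at hc
          rw [memSW]
          constructor
          · rw [ent, hc.1, hx.2.1]; ring
          · rw [ent, hx.2.2, hc.2.1]; ring
        have hinj : Set.InjOn (fun p : G × G => p.1 * p.2) ↑(SA ×ˢ SC) := by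
          rintro ⟨x, c⟩ hp ⟨x', c'⟩ hq h
          simp only [mem_coe, mem_product] at hp hq
          obtain ⟨hx, hc⟩ := hp; obtain ⟨hx', hc'⟩ := hq
          rw [memSA] at hx hx'; rw [memSC] at hc hc'
          have h' : x * c = x' * c' := h
          have e01 : m (x * c) 0 1 = m (x' * c') 0 1 := by rw [h']
          rw [ent, ent, hx.1, hx'.1, hc.2.1, hc'.2.1] at e01
          have e01' : m c 0 1 = m c' 0 1 := by linear_combination e01
          have hc01 : m c 0 1 ≠ 0 := left_ne_zero_of_mul_eq_one hc.2.2
          have e10 : m c 1 0 = m c' 1 0 := by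
            apply mul_left_cancel₀ hc01
            rw [hc.2.2, e01', hc'.2.2]
          have hcc : c = c' := by
            apply mm_inj G
            exact matext (hc.1.trans hc'.1.symm) e01' e10 (hc.2.1.trans hc'.2.1.symm)
          subst hcc
          have hxx : x = x' := mul_right_cancel h'
          exact congrArg (fun z => (z, c)) hxx
        have := Finset.card_le_card_of_injOn _ hmaps hinj
        rwa [card_product] at this
      have hkh : SC.card ≤ SH.card ∨ SC.card = 0 := by
        rcases Finset.eq_empty_or_nonempty SC with hC | ⟨c₀, hc₀⟩
        · right; rw [hC, card_empty]
        · left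
          have hc₀C := (memSC c₀).mp hc₀
          have hj : m c₀⁻¹ 0 0 = 0 ∧ m c₀⁻¹ 1 1 = 0 ∧ m c₀ 0 1 * m c₀⁻¹ 1 0 = 1 ∧
              m c₀ 1 0 * m c₀⁻¹ 0 1 = 1 :=
            inv_anti (c₀ : GL (Fin 2) (ZMod ℓ)) hc₀C.1 hc₀C.2.1
          apply Finset.card_le_card_of_injOn (fun x : G => c₀⁻¹ * x)
          · intro x hx
            simp only [mem_coe] at hx ⊢
            rw [memSC] at hx
            rw [memSH]
            constructor
            · rw [ent, hj.1, hx.2.1]; ring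
            · rw [ent, hj.2.1, hx.1]; ring
          · intro x _ y _ h
            have h' : c₀⁻¹ * x = c₀⁻¹ * y := h
            exact mul_left_cancel h'
      rcases Nat.lt_or_ge SA.card 2 with ha | ha
      · -- SA.card ≤ 1
        rcases hkh with hkh | hkh <;> omega
      · have h4a : 4 * SA.card ≤ SA.card * SA.card + 4 := by nlinarith
        have haa : SA.card * SA.card ≤ SH.card := by
          have h5 := hABle
          rw [← hab] at h5
          exact h5
        have h4aH : 4 * SA.card ≤ SH.card + 4 := le_trans h4a (Nat.add_le_add_right haa 4)
        have h2k : 2 * SC.card ≤ SW.card :=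
          le_trans (Nat.mul_le_mul_right _ ha) hACle
        omega
  have hnQ : (0:ℚ) < (n:ℚ) := by exact_mod_cast hn
  have h2 : (2 * SS.card : ℚ) ≤ (n : ℚ) + 2 := by
    exact_mod_cast (show (2 * SS.card : ℕ) ≤ n + 2 by omega)
  have heq : (1/2 + 1/(n:ℚ)) * n = n/2 + 1 := by field_simp
  rw [div_le_iff₀ hnQ, heq]
  push_cast
  linarith
end

section
/- For any subgroup G of GL₂(𝔽₂): if the proportion of matrices in G having 1 as an eigenvalue is not 1, then it is at most 2/3. -/
private lemma root_iff_det (M : Matrix (Fin 2) (Fin 2) (ZMod 2)) :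
    M.charpoly.IsRoot 1 ↔ (1 - M).det = 0 := by
  rw [Matrix.charpoly, Polynomial.IsRoot, Matrix.det_fin_two, Matrix.det_fin_two]
  simp [Matrix.charmatrix_apply_eq, Matrix.charmatrix_apply_ne, Matrix.sub_apply,
    Matrix.one_apply]

private lemma gl2_facts : ∀ g : GL (Fin 2) (ZMod 2),
    (1 - (g : Matrix (Fin 2) (Fin 2) (ZMod 2))).det ≠ 0 →
    (1 - ((g⁻¹ : GL (Fin 2) (ZMod 2)) : Matrix (Fin 2) (Fin 2) (ZMod 2))).det ≠ 0 ∧ g⁻¹ ≠ g := by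
  decide

private lemma gl2_card : Nat.card (GL (Fin 2) (ZMod 2)) = 6 := by
  rw [Nat.card_eq_fintype_card]; decide

theorem stmt_18 (G : Subgroup (GL (Fin 2) (ZMod 2)))
    (hne : (Nat.card {γ : G // (Matrix.charpoly (((γ : GL (Fin 2) (ZMod 2)) :
        Matrix (Fin 2) (Fin 2) (ZMod 2)))).IsRoot 1} : ℚ) / (Nat.card G : ℚ) ≠ 1) :
    (Nat.card {γ : G // (Matrix.charpoly (((γ : GL (Fin 2) (ZMod 2)) :
        Matrix (Fin 2) (Fin 2) (ZMod 2)))).IsRoot 1} : ℚ) / (Nat.card G : ℚ) ≤ 2 / 3 := by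
  classical
  haveI : Fintype G := Fintype.ofFinite G
  set Q : G → Prop := fun γ =>
    (1 - ((γ : GL (Fin 2) (ZMod 2)) : Matrix (Fin 2) (Fin 2) (ZMod 2))).det = 0 with hQ
  have hn : Nat.card {γ : G // (Matrix.charpoly (((γ : GL (Fin 2) (ZMod 2)) :
      Matrix (Fin 2) (Fin 2) (ZMod 2)))).IsRoot 1} = (Finset.univ.filter Q).card := by
    rw [Nat.card_congr (Equiv.subtypeEquivRight (fun γ => root_iff_det _)),
      Nat.card_eq_fintype_card, Fintype.card_subtype]
  have hm : Nat.card G = Fintype.card G := Nat.card_eq_fintype_card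
  set n := (Finset.univ.filter Q).card with hnn
  set m := Fintype.card G with hmm
  -- m divides 6
  have hdvd : m ∣ 6 := by
    rw [← hm, ← gl2_card]
    exact Subgroup.card_subgroup_dvd_card G
  have hm6 : m ≤ 6 := Nat.le_of_dvd (by norm_num) hdvd
  have hmpos : 0 < m := Fintype.card_pos
  -- n ≠ m
  have hne' : n ≠ m := by
    intro h
    apply hne
    rw [hn, hm, h, div_self]
    exact_mod_cast hmpos.ne'
  have hnle : n ≤ m := by
    rw [hmm, ← Finset.card_univ]
    exact Finset.card_filter_le _ _
  -- find an element not satisfying Q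
  have hlt : n < m := lt_of_le_of_ne hnle hne'
  obtain ⟨γ0, hγ0⟩ : ∃ γ0 : G, ¬ Q γ0 := by
    by_contra h
    push_neg at h
    apply hne'
    rw [hnn, hmm, ← Finset.card_univ]
    congr 1
    exact Finset.filter_true_of_mem (fun x _ => h x)
  -- γ0⁻¹ also fails Q and differs from γ0
  obtain ⟨h1, h2⟩ := gl2_facts (γ0 : GL (Fin 2) (ZMod 2)) hγ0
  have hγ0inv : ¬ Q γ0⁻¹ := by
    simpa [hQ] using h1
  have hne2 : γ0⁻¹ ≠ γ0 := by
    intro h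
    apply h2
    exact_mod_cast congrArg (Subtype.val) h
  -- the complement has at least 2 elements
  have hpair : ({γ0, γ0⁻¹} : Finset G) ⊆ Finset.univ.filter (fun γ => ¬ Q γ) := by
    intro x hx
    simp only [Finset.mem_insert, Finset.mem_singleton] at hx
    rcases hx with rfl | rfl <;> simp [hγ0, hγ0inv]
  have hpaircard : ({γ0, γ0⁻¹} : Finset G).card = 2 := by
    rw [Finset.card_insert_of_notMem (by simp [Ne.symm hne2]), Finset.card_singleton]
  have hcompl : 2 ≤ (Finset.univ.filter (fun γ => ¬ Q γ)).card := by
    exact le_trans (le_of_eq hpaircard.symm) (Finset.card_le_card hpair)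
  have hsum : n + (Finset.univ.filter (fun γ => ¬ Q γ)).card = m := by
    rw [hnn, hmm, ← Finset.card_univ]
    exact Finset.card_filter_add_card_filter_not _
  have key : 3 * n ≤ 2 * m := by omega
  -- conclude
  rw [hn, hm]
  rw [div_le_div_iff₀ (by exact_mod_cast hmpos) (by norm_num)]
  have : (n : ℚ) * 3 ≤ (m : ℚ) * 2 := by exact_mod_cast by omega
  linarith
end

section
/- Let ℓ be an odd prime and G ⊆ GL₂(𝔽_ℓ) a subgroup whose image Ḡ in PGL₂(𝔽_ℓ) is isomorphic to the alternating group A₄. Then the proportion of matrices in G having an eigenvalue in 𝔽_ℓ lies in the set {1/12, 1/3, 3/4, 1}. -/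
abbrev A4 := alternatingGroup (Fin 4)

def x2 : A4 := ⟨(Equiv.swap 0 1) * (Equiv.swap 2 3), by rw [Equiv.Perm.mem_alternatingGroup]; decide⟩
def x3 : A4 := ⟨(Equiv.swap 0 1) * (Equiv.swap 1 2), by rw [Equiv.Perm.mem_alternatingGroup]; decide⟩

def cls (x a : A4) : Prop := ∃ b, b*x*b⁻¹ = a

instance : DecidablePred (cls x2) := fun _ => inferInstanceAs (Decidable (∃ _, _))
instance : DecidablePred (cls x3) := fun _ => inferInstanceAs (Decidable (∃ _, _))
instance : DecidablePred (cls (x3*x3)) := fun _ => inferInstanceAs (Decidable (∃ _, _))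

lemma L1 : ∀ a : A4, a = 1 ∨ cls x2 a ∨ cls x3 a ∨ cls (x3*x3) a := by decide

lemma Lsq : x3 * x3 * (x3 * x3) = x3 := by decide

lemma C1 : (Finset.univ.filter (fun a : A4 => a = 1)).card = 1 := by decide
lemma C2 : (Finset.univ.filter (fun a : A4 => a = 1 ∨ cls x2 a)).card = 4 := by decide
lemma C3 : (Finset.univ.filter (fun a : A4 => a = 1 ∨ cls x3 a ∨ cls (x3*x3) a)).card = 9 := by decide
lemma C4 : (Finset.univ : Finset A4).card = 12 := by decide

lemma A4combo (S : Finset A4) (h1 : (1:A4) ∈ S)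
    (hc : ∀ a ∈ S, ∀ b, b*a*b⁻¹ ∈ S) (hs : ∀ a ∈ S, a*a ∈ S) :
    S.card = 1 ∨ S.card = 4 ∨ S.card = 9 ∨ S.card = 12 := by
  classical
  have key : ∀ x a : A4, cls x a → a ∈ S → x ∈ S := by
    rintro x a ⟨b, rfl⟩ ha
    have := hc _ ha b⁻¹
    simpa [mul_assoc] using this
  have h3iff : x3 ∈ S ↔ x3*x3 ∈ S := by
    constructor
    · intro h; exact hs _ h
    · intro h; have := hs _ h; rwa [Lsq] at this
  by_cases h2 : x2 ∈ S <;> by_cases h3 : x3 ∈ S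
  · -- S = univ
    right; right; right
    have hS : S = Finset.univ := by
      apply Finset.eq_univ_of_forall
      intro a
      rcases L1 a with rfl | ⟨b, rfl⟩ | ⟨b, rfl⟩ | ⟨b, rfl⟩
      · exact h1
      · exact hc _ h2 b
      · exact hc _ h3 b
      · exact hc _ (h3iff.mp h3) b
    rw [hS]; exact C4
  · right; left
    have hS : S = Finset.univ.filter (fun a : A4 => a = 1 ∨ cls x2 a) := by
      ext a
      simp only [Finset.mem_filter, Finset.mem_univ, true_and]
      constructor
      · intro ha
        rcases L1 a with rfl | hx | hx | hx
        · exact Or.inl rfl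
        · exact Or.inr hx
        · exact absurd (key _ _ hx ha) h3
        · exact absurd (h3iff.mpr (key _ _ hx ha)) h3
      · rintro (rfl | ⟨b, rfl⟩)
        · exact h1
        · exact hc _ h2 b
    rw [hS]; exact C2
  · right; right; left
    have hS : S = Finset.univ.filter (fun a : A4 => a = 1 ∨ cls x3 a ∨ cls (x3*x3) a) := by
      ext a
      simp only [Finset.mem_filter, Finset.mem_univ, true_and]
      constructor
      · intro ha
        rcases L1 a with rfl | hx | hx | hx
        · exact Or.inl rfl
        · exact absurd (key _ _ hx ha) h2
        · exact Or.inr (Or.inl hx)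
        · exact Or.inr (Or.inr hx)
      · rintro (rfl | ⟨b, rfl⟩ | ⟨b, rfl⟩)
        · exact h1
        · exact hc _ h3 b
        · exact hc _ (h3iff.mp h3) b
    rw [hS]; exact C3
  · left
    have hS : S = Finset.univ.filter (fun a : A4 => a = 1) := by
      ext a
      simp only [Finset.mem_filter, Finset.mem_univ, true_and]
      constructor
      · intro ha
        rcases L1 a with rfl | hx | hx | hx
        · rfl
        · exact absurd (key _ _ hx ha) h2
        · exact absurd (key _ _ hx ha) h3
        · exact absurd (h3iff.mpr (key _ _ hx ha)) h3
      · rintro rfl; exact h1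
    rw [hS]; exact C1

section MatrixLemmas

variable {K : Type*} [Field K]

/-- `M` has an eigenvalue in `K`. -/
def IsEig (M : Matrix (Fin 2) (Fin 2) K) : Prop :=
  ∃ a : K, (a • (1 : Matrix (Fin 2) (Fin 2) K) - M).det = 0

lemma eval_charpoly2 (M : Matrix (Fin 2) (Fin 2) K) (a : K) :
    (M.charpoly).eval a = (a • (1 : Matrix (Fin 2) (Fin 2) K) - M).det := by
  rw [Matrix.charpoly, ← Polynomial.coe_evalRingHom, RingHom.map_det]
  congr 1
  ext i j
  by_cases h : i = j
  · subst h
    simp [Matrix.charmatrix_apply_eq, Matrix.one_apply]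
  · simp [Matrix.charmatrix_apply_ne _ _ _ h, Matrix.one_apply_ne h]

lemma isEig_iff_root (M : Matrix (Fin 2) (Fin 2) K) :
    (∃ a : K, (M.charpoly).IsRoot a) ↔ IsEig M := by
  unfold IsEig
  simp only [Polynomial.IsRoot, eval_charpoly2]

lemma isEig_one : IsEig (1 : Matrix (Fin 2) (Fin 2) K) :=
  ⟨1, by simp⟩

lemma isEig_conj (u : GL (Fin 2) K) {M : Matrix (Fin 2) (Fin 2) K} (h : IsEig M) :
    IsEig ((u : Matrix (Fin 2) (Fin 2) K) * M * ((u⁻¹ : GL (Fin 2) K) : Matrix (Fin 2) (Fin 2) K)) := by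
  obtain ⟨a, ha⟩ := h
  refine ⟨a, ?_⟩
  have huu : (u : Matrix (Fin 2) (Fin 2) K) * ((u⁻¹ : GL (Fin 2) K) : Matrix (Fin 2) (Fin 2) K) = 1 := by
    rw [← Units.val_mul, mul_inv_cancel, Units.val_one]
  have key : a • (1 : Matrix (Fin 2) (Fin 2) K) -
      (u : Matrix (Fin 2) (Fin 2) K) * M * ((u⁻¹ : GL (Fin 2) K) : Matrix (Fin 2) (Fin 2) K) =
      (u : Matrix (Fin 2) (Fin 2) K) * (a • (1 : Matrix (Fin 2) (Fin 2) K) - M) *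
        ((u⁻¹ : GL (Fin 2) K) : Matrix (Fin 2) (Fin 2) K) := by
    rw [mul_sub, sub_mul, mul_smul_comm, smul_mul_assoc, mul_one, huu]
  rw [key, Matrix.det_mul, Matrix.det_mul, ha, mul_zero, zero_mul]

lemma isEig_sq {M : Matrix (Fin 2) (Fin 2) K} (h : IsEig M) : IsEig (M * M) := by
  obtain ⟨a, ha⟩ := h
  refine ⟨a * a, ?_⟩
  have key : (a * a) • (1 : Matrix (Fin 2) (Fin 2) K) - M * M =
      (a • (1 : Matrix (Fin 2) (Fin 2) K) - M) * (a • (1 : Matrix (Fin 2) (Fin 2) K) + M) := by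
    have hm : M * (a • (1 : Matrix (Fin 2) (Fin 2) K)) = a • M := by
      rw [mul_smul_comm, mul_one]
    rw [sub_mul, mul_add, mul_add, smul_mul_assoc, smul_mul_assoc, mul_smul_comm,
      smul_smul, one_mul, one_mul, hm]
    abel
  rw [key, Matrix.det_mul, ha, zero_mul]

lemma isEig_smul {M : Matrix (Fin 2) (Fin 2) K} {c : K} (hc : c ≠ 0) (h : IsEig M) :
    IsEig (c • M) := by
  obtain ⟨a, ha⟩ := h
  refine ⟨c * a, ?_⟩
  have key : (c * a) • (1 : Matrix (Fin 2) (Fin 2) K) - c • M =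
      c • (a • (1 : Matrix (Fin 2) (Fin 2) K) - M) := by
    rw [smul_sub, smul_smul]
  rw [key, Matrix.det_smul, ha, mul_zero]

lemma center_scalar_s19 {z : GL (Fin 2) K} (hz : z ∈ Subgroup.center (GL (Fin 2) K)) :
    ∃ c : K, c ≠ 0 ∧ (z : Matrix (Fin 2) (Fin 2) K) = c • 1 := by
  have hcomm : ∀ t : Matrix.TransvectionStruct (Fin 2) K,
      Commute t.toMatrix (z : Matrix (Fin 2) (Fin 2) K) := by
    intro t
    set u : GL (Fin 2) K := ⟨t.toMatrix, t.inv.toMatrix, t.mul_inv, t.inv_mul⟩ with hu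
    have h1 : u * z = z * u := Subgroup.mem_center_iff.mp hz u
    have h2 := congrArg Units.val h1
    exact (by simpa [Units.val_mul, hu] using h2 :
      t.toMatrix * (z : Matrix (Fin 2) (Fin 2) K) = (z : Matrix (Fin 2) (Fin 2) K) * t.toMatrix)
  obtain ⟨c, hc⟩ := Matrix.mem_range_scalar_of_commute_transvectionStruct hcomm
  have hc' : (z : Matrix (Fin 2) (Fin 2) K) = c • 1 := by
    rw [← hc]
    ext i j
    simp [Matrix.scalar_apply, Matrix.diagonal, Matrix.one_apply]
  refine ⟨c, ?_, hc'⟩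
  intro h0
  have hunit : IsUnit (z : Matrix (Fin 2) (Fin 2) K).det :=
    (Matrix.isUnit_iff_isUnit_det _).mp z.isUnit
  rw [hc', h0] at hunit
  simp at hunit

end MatrixLemmas

/-- Counting fibers of a surjective group hom over a subset of the target. -/
lemma card_preimage_hom {G H : Type*} [Group G] [Group H] (f : G →* H)
    (hf : Function.Surjective f) (T : Set H) :
    Nat.card (f ⁻¹' T) = Nat.card T * Nat.card f.ker := by
  classical
  let s : H → G := Function.surjInv hf
  have hs : ∀ h, f (s h) = h := Function.surjInv_eq hf
  have e : (f ⁻¹' T) ≃ T × f.ker := by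
    refine ⟨fun g => (⟨f g, g.2⟩, ⟨(s (f g))⁻¹ * g, ?_⟩),
            fun p => ⟨s p.1 * p.2, ?_⟩, ?_, ?_⟩
    · rw [MonoidHom.mem_ker, map_mul, map_inv, hs, inv_mul_cancel]
    · have h2 : f p.2 = 1 := p.2.2
      simp only [Set.mem_preimage, map_mul, hs, h2, mul_one]
      exact p.1.2
    · intro g
      ext
      simp [mul_assoc]
    · intro p
      have h2 : f (p.2 : G) = 1 := p.2.2
      have hfs : f ((s p.1) * p.2) = (p.1 : H) := by rw [map_mul, hs, h2, mul_one]
      refine Prod.ext ?_ ?_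
      · ext; exact hfs
      · ext
        simp only [hfs]
        simp [mul_assoc]
  rw [Nat.card_congr e, Nat.card_prod]

theorem stmt_19 (ℓ : ℕ) [Fact (Nat.Prime ℓ)] (hodd : Odd ℓ)
    (G : Subgroup (GL (Fin 2) (ZMod ℓ)))
    (hA4 : Nonempty
      ((G.map (QuotientGroup.mk' (Subgroup.center (GL (Fin 2) (ZMod ℓ))))) ≃*
        alternatingGroup (Fin 4))) :
    (Nat.card {γ : G // ∃ a : ZMod ℓ,
        (Matrix.charpoly (((γ : GL (Fin 2) (ZMod ℓ)) :
          Matrix (Fin 2) (Fin 2) (ZMod ℓ)))).IsRoot a} : ℚ) / (Nat.card G : ℚ) ∈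
      ({1 / 12, 1 / 3, 3 / 4, 1} : Set ℚ) := by
  classical
  haveI : NeZero ℓ := ⟨(Fact.out : ℓ.Prime).ne_zero⟩
  set Z := Subgroup.center (GL (Fin 2) (ZMod ℓ)) with hZdef
  let ψ : G →* (GL (Fin 2) (ZMod ℓ) ⧸ Z) := (QuotientGroup.mk' Z).comp G.subtype
  let f : G →* ψ.range := ψ.rangeRestrict
  have hsurj : Function.Surjective f := ψ.rangeRestrict_surjective
  have hrange : ψ.range = G.map (QuotientGroup.mk' Z) := by
    rw [MonoidHom.range_comp, Subgroup.range_subtype]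
  let e : ψ.range ≃* alternatingGroup (Fin 4) :=
    (MulEquiv.subgroupCongr hrange).trans hA4.some
  let P : G → Prop := fun γ =>
    IsEig ((γ : GL (Fin 2) (ZMod ℓ)) : Matrix (Fin 2) (Fin 2) (ZMod ℓ))
  let T : Set ψ.range := f '' {γ | P γ}
  -- P is determined by the image under f
  have hT : ∀ γ : G, P γ ↔ f γ ∈ T := by
    intro γ
    constructor
    · intro h; exact ⟨γ, h, rfl⟩
    · rintro ⟨γ', hγ', hf⟩
      have h1 : ψ γ' = ψ γ := congrArg Subtype.val hf
      have h2 : ((γ' : GL (Fin 2) (ZMod ℓ)))⁻¹ * (γ : GL (Fin 2) (ZMod ℓ)) ∈ Z := by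
        have h1' : ((γ' : GL (Fin 2) (ZMod ℓ)) : GL (Fin 2) (ZMod ℓ) ⧸ Z) =
            ((γ : GL (Fin 2) (ZMod ℓ)) : GL (Fin 2) (ZMod ℓ) ⧸ Z) := by
          simpa [ψ, QuotientGroup.mk'_apply] using h1
        exact QuotientGroup.eq.mp h1'
      obtain ⟨c, hc0, hc⟩ := center_scalar_s19 h2
      have hγeq : ((γ : GL (Fin 2) (ZMod ℓ)) : Matrix (Fin 2) (Fin 2) (ZMod ℓ)) =
          c • ((γ' : GL (Fin 2) (ZMod ℓ)) : Matrix (Fin 2) (Fin 2) (ZMod ℓ)) := by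
        have : (γ : GL (Fin 2) (ZMod ℓ)) =
            (γ' : GL (Fin 2) (ZMod ℓ)) * ((γ' : GL (Fin 2) (ZMod ℓ))⁻¹ *
              (γ : GL (Fin 2) (ZMod ℓ))) := by group
        rw [this, Units.val_mul, hc, mul_smul_comm, mul_one]
      show IsEig _
      rw [hγeq]
      exact isEig_smul hc0 hγ'
  -- counting
  have hcard1 : Nat.card {γ : G // ∃ a : ZMod ℓ,
      (Matrix.charpoly (((γ : GL (Fin 2) (ZMod ℓ)) :
        Matrix (Fin 2) (Fin 2) (ZMod ℓ)))).IsRoot a} = Nat.card (f ⁻¹' T) :=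
    Nat.card_congr (Equiv.subtypeEquivRight (fun γ => (isEig_iff_root _).trans (hT γ)))
  have hcard2 : Nat.card (f ⁻¹' T) = Nat.card T * Nat.card f.ker :=
    card_preimage_hom f hsurj T
  have hcardG : Nat.card G = Nat.card ψ.range * Nat.card f.ker := by
    have h := card_preimage_hom f hsurj Set.univ
    rw [Set.preimage_univ] at h
    rw [← Nat.card_congr (Equiv.Set.univ G), h, Nat.card_congr (Equiv.Set.univ ψ.range)]
  have h12 : Nat.card ψ.range = 12 := by
    rw [Nat.card_congr e.toEquiv, Nat.card_eq_fintype_card]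
    have h24 := two_mul_card_alternatingGroup (α := Fin 4)
    rw [Fintype.card_perm] at h24
    simp only [Fintype.card_fin] at h24
    have h24' : (4 : ℕ).factorial = 24 := by norm_num [Nat.factorial]
    rw [h24'] at h24
    omega
  -- transfer T to a finset of A4
  let S : Finset A4 := (Set.toFinite (⇑e '' T)).toFinset
  have hmemS : ∀ a : A4, a ∈ S ↔ a ∈ ⇑e '' T := fun a => Set.Finite.mem_toFinset _
  have hcardT : Nat.card T = S.card := by
    rw [Nat.card_congr (Equiv.Set.image ⇑e T e.injective)]
    rw [Nat.card_coe_set_eq, Set.ncard_eq_toFinset_card (⇑e '' T) (Set.toFinite _)]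
  have hP1 : P 1 := by
    show IsEig _
    have : ((( 1 : G) : GL (Fin 2) (ZMod ℓ)) : Matrix (Fin 2) (Fin 2) (ZMod ℓ)) = 1 := by
      simp
    rw [this]; exact isEig_one
  have h1S : (1 : A4) ∈ S := by
    rw [hmemS]
    exact ⟨1, ⟨1, hP1, map_one f⟩, map_one e⟩
  have hconjS : ∀ a ∈ S, ∀ b : A4, b * a * b⁻¹ ∈ S := by
    intro a ha b
    rw [hmemS] at ha ⊢
    obtain ⟨t, ht, rfl⟩ := ha
    obtain ⟨γ, hγ, rfl⟩ := ht
    obtain ⟨g, hg⟩ := hsurj (e.symm b)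
    refine ⟨e.symm b * f γ * (e.symm b)⁻¹, ⟨g * γ * g⁻¹, ?_, by rw [map_mul, map_mul, map_inv, hg]⟩, ?_⟩
    · show IsEig _
      have hcoe : (((g * γ * g⁻¹ : G) : GL (Fin 2) (ZMod ℓ)) :
          Matrix (Fin 2) (Fin 2) (ZMod ℓ)) =
          ((g : GL (Fin 2) (ZMod ℓ)) : Matrix (Fin 2) (Fin 2) (ZMod ℓ)) *
          ((γ : GL (Fin 2) (ZMod ℓ)) : Matrix (Fin 2) (Fin 2) (ZMod ℓ)) *
          (((g : GL (Fin 2) (ZMod ℓ))⁻¹ : GL (Fin 2) (ZMod ℓ)) :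
            Matrix (Fin 2) (Fin 2) (ZMod ℓ)) := by
        push_cast
        rfl
      rw [hcoe]
      exact isEig_conj _ hγ
    · rw [map_mul, map_mul, map_inv, MulEquiv.apply_symm_apply]
  have hsqS : ∀ a ∈ S, a * a ∈ S := by
    intro a ha
    rw [hmemS] at ha ⊢
    obtain ⟨t, ht, rfl⟩ := ha
    obtain ⟨γ, hγ, rfl⟩ := ht
    refine ⟨f γ * f γ, ⟨γ * γ, ?_, by rw [map_mul]⟩, by rw [map_mul]⟩
    show IsEig _
    have hcoe : (((γ * γ : G) : GL (Fin 2) (ZMod ℓ)) : Matrix (Fin 2) (Fin 2) (ZMod ℓ)) =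
        ((γ : GL (Fin 2) (ZMod ℓ)) : Matrix (Fin 2) (Fin 2) (ZMod ℓ)) *
        ((γ : GL (Fin 2) (ZMod ℓ)) : Matrix (Fin 2) (Fin 2) (ZMod ℓ)) := by
      push_cast; rfl
    rw [hcoe]
    exact isEig_sq hγ
  -- positivity of the kernel cardinality
  haveI : Finite (GL (Fin 2) (ZMod ℓ)) := inferInstance
  have cpos : 0 < Nat.card f.ker := Nat.card_pos
  have hc : ((Nat.card f.ker : ℚ)) ≠ 0 := by
    exact_mod_cast cpos.ne'
  rw [hcard1, hcard2, hcardT, hcardG, h12]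
  push_cast
  rw [mul_div_mul_right _ _ hc]
  rcases A4combo S h1S hconjS hsqS with h | h | h | h <;> rw [h] <;>
    norm_num [Set.mem_insert_iff]
end
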